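/- arXiv:2005.12505 — 6 statements merged into one kernel-verified Lean document; each statement's English description precedes it below -/
import Mathlib

section
/- Let G be a finite nonempty set of points in Euclidean space ℝ^d, let S = conv(G) be its convex hull, let ∂S denote the set of extreme points of S, and let C = {w₁,…,wₙ} be distinct candidates. Then some candidate wins under consensus voting if and only if there exists i ∈ {1,…,n} such that wᵢ ∈ ⋂_{k ≠ i} ⋂_{v ∈ ∂S} B(v, w_k), where B(v, w) denotes the closed Euclidean ball centred at v with radius ‖w − v‖. Equivalently: there exists i such that for every k ≠ i and every extreme point v of S, ‖v − wᵢ‖ ≤ ‖v − w_k‖. -/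
open scoped RealInnerProductSpace

/-- The "bisector halfspace" `{v | ‖v - a‖ ≤ ‖v - b‖}` is convex. -/
lemma bisector_convex {E : Type*} [NormedAddCommGroup E] [InnerProductSpace ℝ E]
    (a b : E) : Convex ℝ {v : E | ‖v - a‖ ≤ ‖v - b‖} := by
  have hset : {v : E | ‖v - a‖ ≤ ‖v - b‖}
      = {v : E | 2 * ⟪v, b - a⟫ ≤ ‖b‖ ^ 2 - ‖a‖ ^ 2} := by
    ext v
    simp only [Set.mem_setOf_eq]
    rw [← pow_le_pow_iff_left₀ (norm_nonneg _) (norm_nonneg _) two_ne_zero,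
      norm_sub_sq_real, norm_sub_sq_real, inner_sub_right]
    ring_nf
    constructor <;> intro h <;> linarith
  rw [hset]
  exact convex_halfSpace_le
    ⟨fun x y => by rw [inner_add_left]; ring, fun c x => by
      rw [real_inner_smul_left, smul_eq_mul]; ring⟩ _

lemma bisector_closed {E : Type*} [NormedAddCommGroup E] [InnerProductSpace ℝ E]
    (a b : E) : IsClosed {v : E | ‖v - a‖ ≤ ‖v - b‖} :=
  isClosed_le (by fun_prop) (by fun_prop)

/-- For a finite nonempty set `G` of points in `ℝ^d` with convex hull `S`,
extreme points `∂S`, and distinct candidates `w 1, …, w n`, some candidate wins under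
consensus voting iff there is an `i` with
`w i ∈ ⋂_{k ≠ i} ⋂_{v ∈ ∂S} B(v, ‖w k - v‖)`,
where `B(v, r)` is the closed Euclidean ball of centre `v` and radius `r`. -/
theorem consensus_winner_iff_ball_intersection
    {d : ℕ} (G : Finset (EuclideanSpace ℝ (Fin d))) (hG : G.Nonempty)
    {n : ℕ} (w : Fin n → EuclideanSpace ℝ (Fin d)) (hw : Function.Injective w) :
    (∃ i, ∀ v ∈ G, ∀ j, j ≠ i → ‖v - w i‖ ≤ ‖v - w j‖) ↔
      (∃ i, w i ∈ ⋂ k ∈ {k | k ≠ i},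
        ⋂ v ∈ Set.extremePoints ℝ (convexHull ℝ (G : Set (EuclideanSpace ℝ (Fin d)))),
          Metric.closedBall v ‖w k - v‖) := by
  have hext : Set.extremePoints ℝ (convexHull ℝ (G : Set (EuclideanSpace ℝ (Fin d))))
      ⊆ (G : Set (EuclideanSpace ℝ (Fin d))) := extremePoints_convexHull_subset
  constructor
  · rintro ⟨i, hi⟩
    refine ⟨i, ?_⟩
    simp only [Set.mem_iInter, Metric.mem_closedBall, dist_eq_norm, Set.mem_setOf_eq]
    intro k hk v hv
    rw [norm_sub_rev (w i) v, norm_sub_rev (w k) v]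
    exact hi v (hext hv) k hk
  · rintro ⟨i, hi⟩
    refine ⟨i, ?_⟩
    simp only [Set.mem_iInter, Metric.mem_closedBall, dist_eq_norm, Set.mem_setOf_eq] at hi
    intro v hv j hj
    -- the extreme points all lie in the bisector halfspace
    set T : Set (EuclideanSpace ℝ (Fin d)) := {v | ‖v - w i‖ ≤ ‖v - w j‖} with hT
    have hTsub : Set.extremePoints ℝ (convexHull ℝ (G : Set (EuclideanSpace ℝ (Fin d)))) ⊆ T := by
      intro x hx
      have := hi j hj x hx
      simpa [hT, Set.mem_setOf_eq, norm_sub_rev (w i) x, norm_sub_rev (w j) x] using this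
    have hcomp : IsCompact (convexHull ℝ (G : Set (EuclideanSpace ℝ (Fin d)))) :=
      G.finite_toSet.isCompact_convexHull (𝕜 := ℝ)
    have hKM := closure_convexHull_extremePoints hcomp (convex_convexHull ℝ _)
    have hST : convexHull ℝ (G : Set (EuclideanSpace ℝ (Fin d))) ⊆ T := by
      rw [← hKM]
      exact closure_minimal (convexHull_min hTsub (bisector_convex _ _))
        (bisector_closed _ _)
    exact hST (subset_convexHull ℝ _ hv)
end

section
/- Consider the consensus-voting group process on a convex compact set K ⊆ ℝ² with vol(K) = 1, and let A = K ∩ W be a cap of K with complementary cap Ā = closure(K \ A). Let p = vol(E_K(Ā, A)) be the probability, over one round of two i.i.d. uniform candidates, that a candidate inside Ā is accepted when the convex hull of the group equals A. Then for every t ≥ 1, Pr[Sᵗ ⊆ A] ≤ (1 − p)ᵗ. -/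
open MeasureTheory Metric Set
open scoped RealInnerProductSpace

noncomputable section

abbrev Pt : Type := EuclideanSpace ℝ (Fin 2)

def vcell (K : Set Pt) (w₁ w₂ : Pt) : Set Pt := {v ∈ K | dist v w₁ ≤ dist v w₂}

def accEvent (K H A : Set Pt) : Set (Pt × Pt) :=
  {p | p.1 ∈ K ∧ p.2 ∈ K ∧
    ((p.1 ∈ H ∧ A ⊆ vcell K p.1 p.2) ∨ (p.2 ∈ H ∧ A ⊆ vcell K p.2 p.1))}

def Accepts (G : Set Pt) (w₁ w₂ : Pt) : Prop := ∀ v ∈ G, dist v w₁ ≤ dist v w₂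

open Classical in
def step (G : Set Pt) (c : Pt × Pt) : Set Pt :=
  if Accepts G c.1 c.2 then insert c.1 G
  else if Accepts G c.2 c.1 then insert c.2 G
  else G

def grp {k : ℕ} (init : Fin k → Pt) (c : ℕ → Pt × Pt) : ℕ → Set Pt
  | 0 => Set.range init
  | t + 1 => step (grp init c t) (c t)

def extSeq {T : ℕ} (c : Fin T → Pt × Pt) : ℕ → Pt × Pt :=
  fun n => if h : n < T then c ⟨n, h⟩ else 0

def procMeasure (μ : Measure Pt) (k T : ℕ) :
    Measure ((Fin k → Pt) × (Fin T → Pt × Pt)) :=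
  (Measure.pi fun _ => μ).prod (Measure.pi fun _ => μ.prod μ)

instance (t : ℕ) : BorelSpace (Fin t → Pt × Pt) := Pi.borelSpace
instance (k t : ℕ) : BorelSpace ((Fin k → Pt) × (Fin t → Pt × Pt)) := Prod.borelSpace

lemma subset_step (G : Set Pt) (c : Pt × Pt) : G ⊆ step G c := by
  unfold step; split_ifs <;> first | exact Set.subset_insert _ _ | rfl

lemma grp_mono {k : ℕ} (init : Fin k → Pt) (c : ℕ → Pt × Pt) {a b : ℕ} (h : a ≤ b) :
    grp init c a ⊆ grp init c b := by
  induction b with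
  | zero => rw [Nat.le_zero.mp h]
  | succ n ih =>
    rcases Nat.lt_or_ge a (n + 1) with h' | h'
    · exact (ih (Nat.lt_succ_iff.mp h')).trans (subset_step _ _)
    · rw [le_antisymm h h']

lemma accEvent_isClosed (K H A : Set Pt) (hK : IsClosed K) (hH : IsClosed H) (hAK : A ⊆ K) :
    IsClosed (accEvent K H A) := by
  have hsub : ∀ w x : Pt, (A ⊆ vcell K w x) ↔ ∀ v ∈ A, dist v w ≤ dist v x := by
    intro w x
    constructor
    · exact fun h v hv => (h hv).2
    · exact fun h v hv => ⟨hAK hv, h v hv⟩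
  have hC : ∀ f g : Pt × Pt → Pt, Continuous f → Continuous g →
      IsClosed {p : Pt × Pt | ∀ v ∈ A, dist v (f p) ≤ dist v (g p)} := by
    intro f g hf hg
    have : {p : Pt × Pt | ∀ v ∈ A, dist v (f p) ≤ dist v (g p)} =
        ⋂ v ∈ A, {p : Pt × Pt | dist v (f p) ≤ dist v (g p)} := by ext p; simp
    rw [this]
    exact isClosed_biInter fun v _ =>
      isClosed_le (continuous_const.dist hf) (continuous_const.dist hg)
  have heq : accEvent K H A =
      (Prod.fst ⁻¹' K) ∩ ((Prod.snd ⁻¹' K) ∩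
        (((Prod.fst ⁻¹' H) ∩ {p : Pt × Pt | ∀ v ∈ A, dist v p.1 ≤ dist v p.2}) ∪
         ((Prod.snd ⁻¹' H) ∩ {p : Pt × Pt | ∀ v ∈ A, dist v p.2 ≤ dist v p.1}))) := by
    ext p
    simp only [accEvent, mem_setOf_eq, mem_inter_iff, mem_preimage, mem_union, hsub]
  rw [heq]
  exact (hK.preimage continuous_fst).inter ((hK.preimage continuous_snd).inter
    (((hH.preimage continuous_fst).inter (hC _ _ continuous_fst continuous_snd)).union
     ((hH.preimage continuous_snd).inter (hC _ _ continuous_snd continuous_fst))))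

/-- The key deterministic lemma. -/
lemma core {k t : ℕ} (K W A : Set Pt) (u : Pt) (a : ℝ)
    (hWdef : W = {x : Pt | ⟪u, x⟫ ≤ a}) (hA : A = K ∩ W)
    (init : Fin k → Pt) (c : Fin t → Pt × Pt) (i0 : Fin k)
    (hhull : convexHull ℝ (grp init (extSeq c) t) ⊆ A) (s : Fin t)
    (hL1 : ⟪u, (c s).1⟫ ≠ a) (hL2 : ⟪u, (c s).2⟫ ≠ a)
    (htie : dist (init i0) (c s).1 ≠ dist (init i0) (c s).2) :
    c s ∉ accEvent K (closure (K \ A)) A := by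
  intro hE
  set G := grp init (extSeq c) s.val with hGdef
  have hsubA : ∀ m : ℕ, m ≤ t → grp init (extSeq c) m ⊆ A := fun m hm =>
    (grp_mono init _ hm).trans ((subset_convexHull ℝ _).trans hhull)
  have hGA : G ⊆ A := hsubA s.val s.isLt.le
  have hstep : grp init (extSeq c) (s.val + 1) = step G (c s) := by
    show step (grp init (extSeq c) s.val) (extSeq c s.val) = _
    simp [extSeq, s.isLt]
    rfl
  have hstepA : step G (c s) ⊆ A := hstep ▸ hsubA (s.val + 1) s.isLt
  -- closure (K \ A) is on the far side
  have hfar : closure (K \ A) ⊆ {x : Pt | a ≤ ⟪u, x⟫} := by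
    apply closure_minimal _ (isClosed_le continuous_const (continuous_const.inner continuous_id))
    intro x hx
    by_contra hxa
    apply hx.2
    rw [hA]
    refine ⟨hx.1, ?_⟩
    rw [hWdef]
    exact le_of_not_ge (a := a) (b := ⟪u, x⟫) hxa
  have hnear : ∀ x ∈ A, ⟪u, x⟫ ≤ a := by
    intro x hx
    have := (hA ▸ hx).2
    rwa [hWdef] at this
  have hAcc : ∀ w x : Pt, A ⊆ vcell K w x → Accepts G w x := by
    intro w x h v hv
    exact (h (hGA hv)).2
  have hmem0 : init i0 ∈ G := grp_mono init _ (Nat.zero_le _) (Set.mem_range_self i0)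
  obtain ⟨-, -, hcase⟩ := hE
  rcases hcase with ⟨hH1, hvc1⟩ | ⟨hH2, hvc2⟩
  · have hAcc1 : Accepts G (c s).1 (c s).2 := hAcc _ _ hvc1
    have h1A : (c s).1 ∈ A := hstepA (by unfold step; rw [if_pos hAcc1]; exact Set.mem_insert _ _)
    exact hL1 (le_antisymm (hnear _ h1A) (hfar hH1))
  · have hAcc2 : Accepts G (c s).2 (c s).1 := hAcc _ _ hvc2
    by_cases hAcc1 : Accepts G (c s).1 (c s).2
    · exact htie (le_antisymm (hAcc1 _ hmem0) (hAcc2 _ hmem0))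
    · have h2A : (c s).2 ∈ A := hstepA (by
        unfold step; rw [if_neg hAcc1, if_pos hAcc2]; exact Set.mem_insert _ _)
      exact hL2 (le_antisymm (hnear _ h2A) (hfar hH2))



lemma pi_eval_preimage {t : ℕ} (ν : Measure (Pt × Pt)) [IsProbabilityMeasure ν]
    (s : Fin t) (B : Set (Pt × Pt)) :
    Measure.pi (fun _ : Fin t => ν) ((fun c => c s) ⁻¹' B) = ν B := by
  have h : ((fun c : Fin t → Pt × Pt => c s) ⁻¹' B) =
      Set.pi univ (fun j => if j = s then B else univ) := by
    ext c
    constructor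
    · intro hc j _
      by_cases hj : j = s
      · subst hj; simpa using hc
      · simp [hj]
    · intro hc
      simpa using hc s (mem_univ s)
  rw [h, Measure.pi_pi]
  have h2 : ∀ j : Fin t, (fun _ => ν) j ((fun j => if j = s then B else univ) j)
      = if j = s then ν B else 1 := by
    intro j; by_cases hj : j = s <;> simp [hj]
  rw [Finset.prod_congr rfl fun j _ => h2 j]
  simp

lemma hyperplane_null (u : Pt) (hu : u ≠ 0) (a : ℝ) :
    volume {x : Pt | ⟪u, x⟫ = a} = 0 := by
  have huu : ⟪u, u⟫ ≠ 0 := fun h => hu (inner_self_eq_zero.mp h)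
  set N : Submodule ℝ Pt := LinearMap.ker (innerSL ℝ u : Pt →ₗ[ℝ] ℝ) with hNdef
  have hN : N ≠ ⊤ := by
    intro h
    have hmem : u ∈ N := h ▸ Submodule.mem_top
    rw [hNdef, LinearMap.mem_ker] at hmem
    exact huu (by simpa using hmem)
  set x₀ : Pt := (a / ⟪u, u⟫) • u with hx₀def
  have hx₀ : ⟪u, x₀⟫ = a := by
    rw [hx₀def, real_inner_smul_right]
    exact div_mul_cancel₀ a huu
  have hset : {x : Pt | ⟪u, x⟫ = a} = (fun x : Pt => x + -x₀) ⁻¹' (N : Set Pt) := by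
    ext x
    simp only [mem_setOf_eq, mem_preimage, SetLike.mem_coe, hNdef, LinearMap.mem_ker,
      ContinuousLinearMap.coe_coe, innerSL_apply_apply]
    rw [inner_add_right, inner_neg_right, hx₀]
    constructor
    · intro h; rw [h]; ring
    · intro h; linarith
  rw [hset, measure_preimage_add_right]
  exact Measure.addHaar_submodule volume N hN

lemma tie_null (K : Set Pt) (v : Pt) :
    (volume.restrict K).prod (volume.restrict K)
      {w : Pt × Pt | dist v w.1 = dist v w.2} = 0 := by
  have hmeas : MeasurableSet {w : Pt × Pt | dist v w.1 = dist v w.2} :=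
    (isClosed_eq (continuous_const.dist continuous_fst)
      (continuous_const.dist continuous_snd)).measurableSet
  rw [Measure.prod_apply hmeas]
  have hz : ∀ w1 : Pt,
      (volume.restrict K) (Prod.mk w1 ⁻¹' {w : Pt × Pt | dist v w.1 = dist v w.2}) = 0 := by
    intro w1
    have hset : Prod.mk w1 ⁻¹' {w : Pt × Pt | dist v w.1 = dist v w.2}
        = sphere v (dist v w1) := by
      ext w2
      simp only [mem_preimage, mem_setOf_eq, mem_sphere]
      rw [dist_comm w2 v]
      exact eq_comm
    rw [hset]
    refine le_antisymm ?_ zero_le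
    calc (volume.restrict K) (sphere v (dist v w1)) ≤ volume (sphere v (dist v w1)) :=
          Measure.le_iff'.1 Measure.restrict_le_self _
      _ = 0 := Measure.addHaar_sphere volume v _
  simp only [hz, lintegral_const, zero_mul]

lemma main_aux (μ : Measure Pt) [IsProbabilityMeasure μ] {k t : ℕ} (i0 : Fin k)
    (E : Set (Pt × Pt)) (hEmeas : MeasurableSet E)
    (L : Set Pt) (hμL : μ L = 0)
    (htie : ∀ v : Pt, μ.prod μ {w : Pt × Pt | dist v w.1 = dist v w.2} = 0)
    (S : Set ((Fin k → Pt) × (Fin t → Pt × Pt)))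
    (hsub : S ⊆ (Prod.snd ⁻¹' (Set.pi univ fun _ : Fin t => Eᶜ)) ∪
      ⋃ s : Fin t, ({ω | (ω.2 s).1 ∈ L} ∪ ({ω | (ω.2 s).2 ∈ L} ∪
        {ω | dist (ω.1 i0) (ω.2 s).1 = dist (ω.1 i0) (ω.2 s).2}))) :
    procMeasure μ k t S ≤ (1 - μ.prod μ E) ^ t := by
  haveI : IsProbabilityMeasure (Measure.pi fun _ : Fin t => μ.prod μ) :=
    Measure.pi.instIsProbabilityMeasure _
  haveI : IsProbabilityMeasure (Measure.pi fun _ : Fin k => μ) :=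
    Measure.pi.instIsProbabilityMeasure _
  have hgood : procMeasure μ k t (Prod.snd ⁻¹' (Set.pi univ fun _ : Fin t => Eᶜ))
      = (1 - μ.prod μ E) ^ t := by
    have h1 : (Prod.snd ⁻¹' (Set.pi univ fun _ : Fin t => Eᶜ) :
        Set ((Fin k → Pt) × (Fin t → Pt × Pt))) = univ ×ˢ (Set.pi univ fun _ : Fin t => Eᶜ) := by
      ext ω; simp [Set.mem_prod]
    rw [procMeasure, h1, Measure.prod_prod, Measure.pi_pi]
    have hcompl : μ.prod μ Eᶜ = 1 - μ.prod μ E := by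
      rw [measure_compl hEmeas (measure_ne_top _ _), measure_univ]
    simp [hcompl]
  have hBadnull : procMeasure μ k t
      (⋃ s : Fin t, ({ω | (ω.2 s).1 ∈ L} ∪ ({ω | (ω.2 s).2 ∈ L} ∪
        {ω : (Fin k → Pt) × (Fin t → Pt × Pt) |
          dist (ω.1 i0) (ω.2 s).1 = dist (ω.1 i0) (ω.2 s).2}))) = 0 := by
    refine measure_iUnion_null fun s => measure_union_null ?_ (measure_union_null ?_ ?_)
    · have h1 : {ω : (Fin k → Pt) × (Fin t → Pt × Pt) | (ω.2 s).1 ∈ L} =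
          univ ×ˢ ((fun c : Fin t → Pt × Pt => c s) ⁻¹' (L ×ˢ univ)) := by
        ext ω; simp [Set.mem_prod]
      rw [procMeasure, h1, Measure.prod_prod, pi_eval_preimage, Measure.prod_prod]
      simp [hμL]
    · have h1 : {ω : (Fin k → Pt) × (Fin t → Pt × Pt) | (ω.2 s).2 ∈ L} =
          univ ×ˢ ((fun c : Fin t → Pt × Pt => c s) ⁻¹' (univ ×ˢ L)) := by
        ext ω; simp [Set.mem_prod]
      rw [procMeasure, h1, Measure.prod_prod, pi_eval_preimage, Measure.prod_prod]
      simp [hμL]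
    · have c1 : Continuous fun ω : (Fin k → Pt) × (Fin t → Pt × Pt) => ω.1 i0 :=
        (continuous_apply i0).comp continuous_fst
      have c2 : Continuous fun ω : (Fin k → Pt) × (Fin t → Pt × Pt) => (ω.2 s).1 :=
        continuous_fst.comp ((continuous_apply s).comp continuous_snd)
      have c3 : Continuous fun ω : (Fin k → Pt) × (Fin t → Pt × Pt) => (ω.2 s).2 :=
        continuous_snd.comp ((continuous_apply s).comp continuous_snd)
      have hBmeas : MeasurableSet {ω : (Fin k → Pt) × (Fin t → Pt × Pt) |
          dist (ω.1 i0) (ω.2 s).1 = dist (ω.1 i0) (ω.2 s).2} :=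
        (isClosed_eq (c1.dist c2) (c1.dist c3)).measurableSet
      rw [procMeasure, Measure.prod_apply hBmeas]
      have hz : ∀ x : Fin k → Pt, (Measure.pi fun _ : Fin t => μ.prod μ)
          (Prod.mk x ⁻¹' {ω : (Fin k → Pt) × (Fin t → Pt × Pt) |
            dist (ω.1 i0) (ω.2 s).1 = dist (ω.1 i0) (ω.2 s).2}) = 0 := by
        intro x
        have h2 : Prod.mk x ⁻¹' {ω : (Fin k → Pt) × (Fin t → Pt × Pt) |
              dist (ω.1 i0) (ω.2 s).1 = dist (ω.1 i0) (ω.2 s).2}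
            = (fun c : Fin t → Pt × Pt => c s) ⁻¹'
              {w : Pt × Pt | dist (x i0) w.1 = dist (x i0) w.2} := rfl
        rw [h2, pi_eval_preimage]
        exact htie (x i0)
      simp only [hz, lintegral_const, zero_mul]
  calc procMeasure μ k t S
      ≤ procMeasure μ k t ((Prod.snd ⁻¹' (Set.pi univ fun _ : Fin t => Eᶜ)) ∪
        ⋃ s : Fin t, ({ω | (ω.2 s).1 ∈ L} ∪ ({ω | (ω.2 s).2 ∈ L} ∪
          {ω : (Fin k → Pt) × (Fin t → Pt × Pt) |
            dist (ω.1 i0) (ω.2 s).1 = dist (ω.1 i0) (ω.2 s).2}))) := measure_mono hsub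
    _ ≤ procMeasure μ k t (Prod.snd ⁻¹' (Set.pi univ fun _ : Fin t => Eᶜ)) +
        procMeasure μ k t (⋃ s : Fin t, ({ω | (ω.2 s).1 ∈ L} ∪ ({ω | (ω.2 s).2 ∈ L} ∪
          {ω : (Fin k → Pt) × (Fin t → Pt × Pt) |
            dist (ω.1 i0) (ω.2 s).1 = dist (ω.1 i0) (ω.2 s).2}))) := measure_union_le _ _
    _ = (1 - μ.prod μ E) ^ t := by rw [hgood, hBadnull, add_zero]

/-- For the consensus-voting process on a convex compact `K ⊆ ℝ²` of
volume `1`, and a cap `A = K ∩ W` with complementary cap `Ā = closure (K \ A)`, letting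
`p = vol (E_K(Ā, A))` be the one-round probability that a candidate inside `Ā` is accepted
when the hull equals `A`, we have `Pr[Sᵗ ⊆ A] ≤ (1 - p)ᵗ` for every `t ≥ 1`. -/
theorem prob_hull_subset_cap_le
    (K : Set Pt) (hK : Convex ℝ K) (hKcomp : IsCompact K) (hKvol : volume K = 1)
    (W : Set Pt) (hW : ∃ (u : Pt) (a : ℝ), u ≠ 0 ∧ W = {x : Pt | ⟪u, x⟫ ≤ a})
    (A : Set Pt) (hA : A = K ∩ W)
    (k : ℕ) (hk : 1 ≤ k) (t : ℕ) (ht : 1 ≤ t) :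
    procMeasure (volume.restrict K) k t
        {ω | convexHull ℝ (grp ω.1 (extSeq ω.2) t) ⊆ A}
      ≤ (1 - volume (accEvent K (closure (K \ A)) A)) ^ t := by
  obtain ⟨u, a, hu, hWdef⟩ := hW
  have hKmeas : MeasurableSet K := hKcomp.isClosed.measurableSet
  have hAK : A ⊆ K := by rw [hA]; exact inter_subset_left
  haveI : IsProbabilityMeasure (volume.restrict K) :=
    ⟨by rw [Measure.restrict_apply_univ, hKvol]⟩
  have hEclosed : IsClosed (accEvent K (closure (K \ A)) A) :=
    accEvent_isClosed K (closure (K \ A)) A hKcomp.isClosed isClosed_closure hAK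
  have hEsub : accEvent K (closure (K \ A)) A ⊆ K ×ˢ K := fun q hq => ⟨hq.1, hq.2.1⟩
  have hνE : (volume.restrict K).prod (volume.restrict K) (accEvent K (closure (K \ A)) A)
      = volume (accEvent K (closure (K \ A)) A) := by
    rw [Measure.prod_restrict, Measure.restrict_apply' (hKmeas.prod hKmeas),
      inter_eq_left.mpr hEsub]
    rfl
  have hμL : volume.restrict K {x : Pt | ⟪u, x⟫ = a} = 0 := by
    refine le_antisymm ?_ zero_le
    calc volume.restrict K {x : Pt | ⟪u, x⟫ = a} ≤ volume {x : Pt | ⟪u, x⟫ = a} :=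
          Measure.le_iff'.1 Measure.restrict_le_self _
      _ = 0 := hyperplane_null u hu a
  rw [← hνE]
  refine main_aux (volume.restrict K) (⟨0, hk⟩ : Fin k)
    (accEvent K (closure (K \ A)) A) hEclosed.measurableSet
    {x : Pt | ⟪u, x⟫ = a} hμL (fun v => tie_null K v) _ ?_
  intro ω hω
  by_cases hb : ω ∈ ⋃ s : Fin t, ({ω : (Fin k → Pt) × (Fin t → Pt × Pt) |
        (ω.2 s).1 ∈ {x : Pt | ⟪u, x⟫ = a}} ∪
      ({ω : (Fin k → Pt) × (Fin t → Pt × Pt) | (ω.2 s).2 ∈ {x : Pt | ⟪u, x⟫ = a}} ∪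
       {ω : (Fin k → Pt) × (Fin t → Pt × Pt) |
        dist (ω.1 ⟨0, hk⟩) (ω.2 s).1 = dist (ω.1 ⟨0, hk⟩) (ω.2 s).2}))
  · exact Or.inr hb
  · left
    simp only [mem_iUnion, mem_union, mem_setOf_eq, not_or, not_exists] at hb
    simp only [mem_preimage, mem_univ_pi, mem_compl_iff]
    intro s
    exact core K W A u a hWdef hA ω.1 ω.2 ⟨0, hk⟩ hω s (hb s).1 (hb s).2.1 (hb s).2.2

end
end

section
/- Let K ⊆ ℝ² be a convex compact set with nonempty interior, let W be a closed half-plane such that K ∩ ∂W is a nondegenerate segment with endpoints z₁ and z₂, let A = K ∩ W be the corresponding cap, and let Ā = closure(K \ A) be the complementary cap (assumed nonempty). Then vol(E_K(A, Ā)) = 2 ∫_A vol( B(z₁, ‖ξ − z₁‖) ∩ B(z₂, ‖ξ − z₂‖) ∩ A ) dξ, where B(z, r) denotes the closed Euclidean ball of centre z and radius r. That is, the one-round probability (with two i.i.d. uniform candidates on K, vol(K)=1) of accepting a candidate inside A given that the convex hull of the group equals Ā is given by this integral. -/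
open MeasureTheory Metric Set
open scoped RealInnerProductSpace

noncomputable section

/-- The Voronoi condition as a linear inequality. -/
lemma vor_iff (w₁ w₂ v : Pt) :
    dist v w₁ ≤ dist v w₂ ↔ 2 * ⟪w₂ - w₁, v⟫ ≤ ‖w₂‖ ^ 2 - ‖w₁‖ ^ 2 := by
  rw [dist_eq_norm, dist_eq_norm,
    ← pow_le_pow_iff_left₀ (norm_nonneg (v - w₁)) (norm_nonneg (v - w₂)) two_ne_zero,
    norm_sub_sq_real, norm_sub_sq_real, inner_sub_left]
  have h₁ := real_inner_comm v w₁
  have h₂ := real_inner_comm v w₂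
  constructor <;> intro h <;> nlinarith

lemma vor_convex (w₁ w₂ : Pt) :
    Convex ℝ {v : Pt | 2 * ⟪w₂ - w₁, v⟫ ≤ ‖w₂‖ ^ 2 - ‖w₁‖ ^ 2} := by
  apply convex_halfSpace_le
  exact ⟨fun x y => by rw [inner_add_right]; ring,
         fun c x => by rw [real_inner_smul_right, smul_eq_mul]; ring⟩

/-- The geometric core: if `w₁, w₂` lie in the cap `A` and `w₁` is at least as close
to both endpoints `z₁, z₂` as `w₂`, then the whole complementary cap lies in the
Voronoi cell of `w₁`. -/
lemma core_subset
    (K : Set Pt) (hK : Convex ℝ K) (hKcl : IsClosed K)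
    (u : Pt) (a : ℝ)
    (z₁ z₂ : Pt) (hseg : K ∩ {x : Pt | ⟪u, x⟫ = a} = segment ℝ z₁ z₂)
    (A : Set Pt) (hA : A = K ∩ {x : Pt | ⟪u, x⟫ ≤ a})
    (w₁ w₂ : Pt) (hw₁ : w₁ ∈ A) (hw₂ : w₂ ∈ A)
    (h₁ : dist z₁ w₁ ≤ dist z₁ w₂) (h₂ : dist z₂ w₁ ≤ dist z₂ w₂) :
    closure (K \ A) ⊆ vcell K w₁ w₂ := by
  have hKsub : closure (K \ A) ⊆ K := closure_minimal diff_subset hKcl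
  have hWge : closure (K \ A) ⊆ {x : Pt | a ≤ ⟪u, x⟫} := by
    apply closure_minimal
    · rintro x ⟨hxK, hxA⟩
      have : ¬ (⟪u, x⟫ ≤ a) := fun h => hxA (hA ▸ ⟨hxK, h⟩)
      exact le_of_lt (lt_of_not_ge this)
    · exact isClosed_le continuous_const (continuous_const.inner continuous_id)
  intro x hx
  refine ⟨hKsub hx, ?_⟩
  rw [vor_iff]
  -- trivial case w₁ = w₂
  by_cases hw : w₁ = w₂
  · subst hw; simp
  -- the segment lies in the halfplane
  have hsegsub : segment ℝ z₁ z₂ ⊆ {v : Pt | 2 * ⟪w₂ - w₁, v⟫ ≤ ‖w₂‖ ^ 2 - ‖w₁‖ ^ 2} := by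
    apply (vor_convex w₁ w₂).segment_subset
    · exact (vor_iff w₁ w₂ z₁).1 h₁
    · exact (vor_iff w₁ w₂ z₂).1 h₂
  have hxK : x ∈ K := hKsub hx
  have hxa : a ≤ ⟪u, x⟫ := hWge hx
  rcases eq_or_lt_of_le hxa with heq | hlt
  · exact hsegsub (hseg ▸ ⟨hxK, heq.symm⟩)
  -- x strictly beyond the line; argue by contradiction
  by_contra hcon
  push_neg at hcon
  have hw₂a : ⟪u, w₂⟫ ≤ a := (hA ▸ hw₂).2
  have hw₂K : w₂ ∈ K := (hA ▸ hw₂).1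
  have hLw₂ : ‖w₂‖ ^ 2 - ‖w₁‖ ^ 2 < 2 * ⟪w₂ - w₁, w₂⟫ := by
    have hne : ‖w₂ - w₁‖ ^ 2 ≠ 0 := by
      simpa [sub_eq_zero] using fun h => hw (h.symm)
    have hpos : 0 < ‖w₂ - w₁‖ ^ 2 := lt_of_le_of_ne (by positivity) (Ne.symm hne)
    have hid : ‖w₂ - w₁‖ ^ 2 = ‖w₂‖ ^ 2 - 2 * ⟪w₂, w₁⟫ + ‖w₁‖ ^ 2 := norm_sub_sq_real w₂ w₁
    have hsl : ⟪w₂ - w₁, w₂⟫ = ⟪w₂, w₂⟫ - ⟪w₁, w₂⟫ := inner_sub_left w₂ w₁ w₂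
    have hc : ⟪w₁, w₂⟫ = ⟪w₂, w₁⟫ := real_inner_comm w₂ w₁
    have hn : ⟪w₂, w₂⟫ = ‖w₂‖ ^ 2 := real_inner_self_eq_norm_sq w₂
    nlinarith
  -- intersection point of segment [x, w₂] with the line
  set d : ℝ := ⟪u, x⟫ - ⟪u, w₂⟫ with hd
  have hdpos : 0 < d := by simp only [hd]; linarith
  set t : ℝ := (⟪u, x⟫ - a) / d with ht
  have htpos : 0 < t := div_pos (by linarith) hdpos
  have htle : t ≤ 1 := by
    rw [ht, div_le_one hdpos]; simp only [hd]; linarith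
  set p : Pt := (1 - t) • x + t • w₂ with hp
  have hpK : p ∈ K := hK hxK hw₂K (by linarith) (le_of_lt htpos) (by ring)
  have hpa : ⟪u, p⟫ = a := by
    have hexp : ⟪u, p⟫ = (1 - t) * ⟪u, x⟫ + t * ⟪u, w₂⟫ := by
      rw [hp, inner_add_right, real_inner_smul_right, real_inner_smul_right]
    have h1 : t * d = ⟪u, x⟫ - a := by
      rw [ht]; exact div_mul_cancel₀ _ (ne_of_gt hdpos)
    have h2 : (1 - t) * ⟪u, x⟫ + t * ⟪u, w₂⟫ = ⟪u, x⟫ - t * d := by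
      rw [hd]; ring
    rw [hexp, h2, h1]; ring
  have hpseg : p ∈ segment ℝ z₁ z₂ := hseg ▸ ⟨hpK, hpa⟩
  have hple := hsegsub hpseg
  simp only [mem_setOf_eq] at hple
  rw [hp, inner_add_right, real_inner_smul_right, real_inner_smul_right] at hple
  nlinarith

/-- Let `K ⊆ ℝ²` be convex compact with nonempty interior and volume `1`,
`W` a closed half-plane with `K ∩ ∂W` a nondegenerate segment with endpoints `z₁, z₂`,
`A = K ∩ W` the corresponding cap and `Ā = closure (K \ A)` its (nonempty) complementary
cap. Then the one-round probability of accepting a candidate inside `A` given that the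
convex hull of the group equals `Ā` satisfies
`vol (E_K(A, Ā)) = 2 ∫_A vol (B(z₁,‖ξ−z₁‖) ∩ B(z₂,‖ξ−z₂‖) ∩ A) dξ`. -/
theorem accEvent_volume_eq_two_integral
    (K : Set Pt) (hK : Convex ℝ K) (hKcomp : IsCompact K)
    (hKint : (interior K).Nonempty) (hKvol : volume K = 1)
    (W : Set Pt) (hW : ∃ (u : Pt) (a : ℝ), u ≠ 0 ∧ W = {x : Pt | ⟪u, x⟫ ≤ a})
    (z₁ z₂ : Pt) (hz : z₁ ≠ z₂) (hseg : K ∩ frontier W = segment ℝ z₁ z₂)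
    (A : Set Pt) (hA : A = K ∩ W)
    (hAbar : (closure (K \ A)).Nonempty) :
    volume (accEvent K A (closure (K \ A)))
      = 2 * ∫⁻ ξ in A,
          volume (closedBall z₁ (dist ξ z₁) ∩ closedBall z₂ (dist ξ z₂) ∩ A) := by
  obtain ⟨u, a, hu, rfl⟩ := hW
  -- the frontier of the halfplane is the line
  have hfr : frontier {x : Pt | ⟪u, x⟫ ≤ a} = {x : Pt | ⟪u, x⟫ = a} := by
    have hf : (innerSL ℝ u : Pt →L[ℝ] ℝ) ≠ 0 := by
      intro h
      have := congrArg (fun f : Pt →L[ℝ] ℝ => f u) h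
      simp only [ContinuousLinearMap.zero_apply, innerSL_apply_apply] at this
      exact hu (inner_self_eq_zero.1 this)
    have hop : IsOpenMap (innerSL ℝ u : Pt →L[ℝ] ℝ) :=
      ContinuousLinearMap.isOpenMap_of_ne_zero _ hf
    have : {x : Pt | ⟪u, x⟫ ≤ a} = (innerSL ℝ u : Pt →L[ℝ] ℝ) ⁻¹' (Iic a) := rfl
    rw [this, ← hop.preimage_frontier_eq_frontier_preimage (innerSL ℝ u).continuous,
      frontier_Iic]
    ext x
    simp
  rw [hfr] at hseg
  set Ab := closure (K \ A) with hAb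
  -- basic facts
  have hz₁ : z₁ ∈ K ∩ {x : Pt | ⟪u, x⟫ = a} := hseg ▸ left_mem_segment ℝ z₁ z₂
  have hz₂ : z₂ ∈ K ∩ {x : Pt | ⟪u, x⟫ = a} := hseg ▸ right_mem_segment ℝ z₁ z₂
  -- the endpoints belong to the complementary cap
  obtain ⟨y, hyK, hyA⟩ : (K \ A).Nonempty := closure_nonempty_iff.1 hAbar
  have hya : a < ⟪u, y⟫ := lt_of_not_ge fun h => hyA (hA ▸ ⟨hyK, h⟩)
  have hzAb : ∀ z : Pt, z ∈ K → ⟪u, z⟫ = a → z ∈ Ab := by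
    intro z hzK hza
    have hlim : Filter.Tendsto (fun n : ℕ => z + ((1 : ℝ) / (n + 1)) • (y - z))
        Filter.atTop (nhds z) := by
      have h0 : Filter.Tendsto (fun n : ℕ => ((1 : ℝ) / (n + 1))) Filter.atTop (nhds 0) :=
        tendsto_one_div_add_atTop_nhds_zero_nat
      have := (h0.smul_const (y - z)).const_add z
      simpa using this
    refine mem_closure_of_tendsto hlim (Filter.Eventually.of_forall fun n => ?_)
    set t : ℝ := (1 : ℝ) / (n + 1) with ht
    have ht0 : 0 < t := by positivity
    have ht1 : t ≤ 1 := by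
      rw [ht, div_le_one (by positivity)]; push_cast; linarith
    constructor
    · have : z + t • (y - z) = (1 - t) • z + t • y := by
        rw [smul_sub, sub_smul, one_smul]; abel
      rw [this]
      exact hK hzK hyK (by linarith) (le_of_lt ht0) (by ring)
    · intro hmem
      have : ⟪u, z + t • (y - z)⟫ ≤ a := (hA ▸ hmem).2
      rw [inner_add_right, real_inner_smul_right, inner_sub_right, hza] at this
      nlinarith
  have hz₁Ab : z₁ ∈ Ab := hzAb z₁ hz₁.1 hz₁.2
  have hz₂Ab : z₂ ∈ Ab := hzAb z₂ hz₂.1 hz₂.2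
  have hAK : A ⊆ K := hA ▸ inter_subset_left
  -- the two halves of the acceptance event
  set S₁ : Set (Pt × Pt) := {p | p.1 ∈ A ∧ p.2 ∈ A ∧
    dist z₁ p.1 ≤ dist z₁ p.2 ∧ dist z₂ p.1 ≤ dist z₂ p.2} with hS₁
  set S₂ : Set (Pt × Pt) := {p | p.1 ∈ A ∧ p.2 ∈ A ∧
    dist z₁ p.2 ≤ dist z₁ p.1 ∧ dist z₂ p.2 ≤ dist z₂ p.1} with hS₂
  -- the acceptance event is exactly S₁ ∪ S₂
  have hforward : ∀ w₁ w₂ : Pt, w₁ ∈ A → w₂ ∈ K → Ab ⊆ vcell K w₁ w₂ →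
      w₂ ∈ A ∧ dist z₁ w₁ ≤ dist z₁ w₂ ∧ dist z₂ w₁ ≤ dist z₂ w₂ := by
    intro w₁ w₂ hw₁ hw₂K hsub
    refine ⟨?_, (hsub hz₁Ab).2, (hsub hz₂Ab).2⟩
    by_contra hw₂A
    have : w₂ ∈ Ab := subset_closure ⟨hw₂K, hw₂A⟩
    have h0 : dist w₂ w₁ ≤ dist w₂ w₂ := (hsub this).2
    rw [dist_self] at h0
    have : w₂ = w₁ := by
      rwa [← dist_le_zero]
    exact hw₂A (this ▸ hw₁)
  have hcore := core_subset K hK hKcomp.isClosed u a z₁ z₂ hseg A hA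
  have hEv : accEvent K A Ab = S₁ ∪ S₂ := by
    ext ⟨w₁, w₂⟩
    simp only [accEvent, mem_setOf_eq, mem_union, hS₁, hS₂]
    constructor
    · rintro ⟨h1K, h2K, ⟨hw₁A, hsub⟩ | ⟨hw₂A, hsub⟩⟩
      · obtain ⟨hw₂A, hd₁, hd₂⟩ := hforward w₁ w₂ hw₁A h2K hsub
        exact Or.inl ⟨hw₁A, hw₂A, hd₁, hd₂⟩
      · obtain ⟨hw₁A, hd₁, hd₂⟩ := hforward w₂ w₁ hw₂A h1K hsub
        exact Or.inr ⟨hw₁A, hw₂A, hd₁, hd₂⟩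
    · rintro (⟨hw₁A, hw₂A, hd₁, hd₂⟩ | ⟨hw₁A, hw₂A, hd₁, hd₂⟩)
      · exact ⟨hAK hw₁A, hAK hw₂A, Or.inl ⟨hw₁A, hcore w₁ w₂ hw₁A hw₂A hd₁ hd₂⟩⟩
      · exact ⟨hAK hw₁A, hAK hw₂A, Or.inr ⟨hw₂A, hcore w₂ w₁ hw₂A hw₁A hd₁ hd₂⟩⟩
  rw [hEv]
  -- measurability
  have hAm : MeasurableSet A := by
    rw [hA]
    exact (hKcomp.isClosed.inter
      (isClosed_le (continuous_const.inner continuous_id) continuous_const)).measurableSet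
  have hd1 : Continuous fun p : Pt × Pt => dist z₁ p.1 :=
    continuous_const.dist continuous_fst
  have hd1' : Continuous fun p : Pt × Pt => dist z₁ p.2 :=
    continuous_const.dist continuous_snd
  have hd2 : Continuous fun p : Pt × Pt => dist z₂ p.1 :=
    continuous_const.dist continuous_fst
  have hd2' : Continuous fun p : Pt × Pt => dist z₂ p.2 :=
    continuous_const.dist continuous_snd
  have hS₁m : MeasurableSet S₁ := by
    have : S₁ = ((A ×ˢ A) ∩ {p : Pt × Pt | dist z₁ p.1 ≤ dist z₁ p.2}) ∩
        {p : Pt × Pt | dist z₂ p.1 ≤ dist z₂ p.2} := by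
      ext ⟨w₁, w₂⟩; simp only [hS₁, mem_setOf_eq, mem_inter_iff, mem_prod]; tauto
    rw [this]
    exact ((hAm.prod hAm).inter
      (measurableSet_le hd1.measurable hd1'.measurable)).inter
      (measurableSet_le hd2.measurable hd2'.measurable)
  have hS₂m : MeasurableSet S₂ := by
    have : S₂ = ((A ×ˢ A) ∩ {p : Pt × Pt | dist z₁ p.2 ≤ dist z₁ p.1}) ∩
        {p : Pt × Pt | dist z₂ p.2 ≤ dist z₂ p.1} := by
      ext ⟨w₁, w₂⟩; simp only [hS₂, mem_setOf_eq, mem_inter_iff, mem_prod]; tauto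
    rw [this]
    exact ((hAm.prod hAm).inter
      (measurableSet_le hd1'.measurable hd1.measurable)).inter
      (measurableSet_le hd2'.measurable hd2.measurable)
  -- the overlap is null
  have hNull : volume (S₁ ∩ S₂) = 0 := by
    have hsub : S₁ ∩ S₂ ⊆ {p : Pt × Pt | dist z₁ p.1 = dist z₁ p.2} := by
      rintro ⟨w₁, w₂⟩ ⟨h1, h2⟩
      exact le_antisymm h1.2.2.1 h2.2.2.1
    refine measure_mono_null hsub ?_
    have hNm : MeasurableSet {p : Pt × Pt | dist z₁ p.1 = dist z₁ p.2} :=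
      (isClosed_eq hd1 hd1').measurableSet
    rw [Measure.volume_eq_prod Pt Pt, Measure.prod_apply hNm]
    have : ∀ x : Pt, volume (Prod.mk x ⁻¹' {p : Pt × Pt | dist z₁ p.1 = dist z₁ p.2}) = 0 := by
      intro x
      have : Prod.mk x ⁻¹' {p : Pt × Pt | dist z₁ p.1 = dist z₁ p.2}
          = sphere z₁ (dist z₁ x) := by
        ext y
        simp only [mem_preimage, mem_setOf_eq, mem_sphere, Prod.fst, Prod.snd]
        rw [dist_comm y z₁]
        exact eq_comm
      rw [this]
      exact Measure.addHaar_sphere volume z₁ (dist z₁ x)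
    simp only [this, lintegral_zero]
  -- vol S₁ = vol S₂ by swapping
  have hswap : volume S₁ = volume S₂ := by
    have h1 : S₁ = Prod.swap ⁻¹' S₂ := by
      ext ⟨w₁, w₂⟩
      simp only [hS₁, hS₂, mem_preimage, Prod.swap, mem_setOf_eq]
      tauto
    rw [h1, Measure.volume_eq_prod Pt Pt,
      Measure.measurePreserving_swap.measure_preimage hS₂m.nullMeasurableSet]
  -- vol S₂ equals the integral
  have hInt : volume S₂ = ∫⁻ ξ in A,
      volume (closedBall z₁ (dist ξ z₁) ∩ closedBall z₂ (dist ξ z₂) ∩ A) := by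
    rw [Measure.volume_eq_prod Pt Pt, Measure.prod_apply hS₂m]
    have hsec : ∀ ξ : Pt, volume (Prod.mk ξ ⁻¹' S₂)
        = A.indicator (fun ξ =>
            volume (closedBall z₁ (dist ξ z₁) ∩ closedBall z₂ (dist ξ z₂) ∩ A)) ξ := by
      intro ξ
      by_cases hξ : ξ ∈ A
      · rw [indicator_of_mem hξ]
        congr 1
        ext w
        simp only [hS₂, mem_preimage, mem_setOf_eq, mem_inter_iff, mem_closedBall]
        rw [dist_comm w z₁, dist_comm w z₂, dist_comm ξ z₁, dist_comm ξ z₂]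
        tauto
      · rw [indicator_of_notMem hξ]
        have hemp : Prod.mk ξ ⁻¹' S₂ = ∅ := by
          ext w
          simp only [hS₂, mem_preimage, mem_setOf_eq, mem_empty_iff_false, iff_false]
          tauto
        rw [hemp]
        exact measure_empty
    rw [lintegral_congr hsec, lintegral_indicator hAm]
  -- put everything together
  have hunion : volume (S₁ ∪ S₂) + volume (S₁ ∩ S₂) = volume S₁ + volume S₂ :=
    measure_union_add_inter S₁ hS₂m
  rw [hNull, add_zero] at hunion
  rw [hunion, hswap, hInt, two_mul]

end
end

section
/- Let ℍ = [0,1]² be the unit square and let 0 < a ≤ b ≤ 1. Let J_{a,b} = {(x,y) ∈ ℍ : x/a + y/b ≤ 1} be the triangular cap of ℍ with perpendicular side lengths a (along the x-axis) and b (along the y-axis). Then vol(E_ℍ(J_{a,b}, closure(ℍ \ J_{a,b}))) ≥ (1/2¹¹)·a⁴·(1 + ln(b/a)). That is, the probability (over two i.i.d. uniform candidates on ℍ) that a candidate inside J_{a,b} is accepted under consensus voting, given that the convex hull of the group equals the complementary cap closure(ℍ \ J_{a,b}), is at least (1/2¹¹)·a⁴·(1 + ln(b/a)). -/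
open MeasureTheory Metric Set
open scoped RealInnerProductSpace ENNReal

noncomputable section

/-- The unit square `[0,1]²` in the plane. -/
def unitSquare : Set Pt := {x : Pt | ∀ i, x i ∈ Set.Icc (0 : ℝ) 1}

/-! ### Auxiliary measure-theoretic lemmas -/

lemma measurable_coord (i : Fin 2) : Measurable fun x : Pt => x i :=
  (continuous_apply i).measurable.comp (MeasurableEquiv.toLp 2 (Fin 2 → ℝ)).symm.measurable

lemma vol_box (p q s u : ℝ) :
    volume {x : Pt | x 0 ∈ Ico p q ∧ x 1 ∈ Ico s u}
      = ENNReal.ofReal (q - p) * ENNReal.ofReal (u - s) := by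
  have hmp : MeasurePreserving (MeasurableEquiv.toLp 2 (Fin 2 → ℝ)).symm :=
    EuclideanSpace.volume_preserving_symm_measurableEquiv_toLp (Fin 2)
  have hset : {x : Pt | x 0 ∈ Ico p q ∧ x 1 ∈ Ico s u}
      = (MeasurableEquiv.toLp 2 (Fin 2 → ℝ)).symm ⁻¹'
        (Set.univ.pi fun i => if i = 0 then Ico p q else Ico s u) := by
    ext x
    simp only [Set.mem_preimage, Set.mem_pi, Set.mem_univ, forall_true_left, Fin.forall_fin_two]
    simp [Set.mem_setOf_eq]
  have hm : MeasurableSet (Set.univ.pi fun i : Fin 2 => if i = 0 then Ico p q else Ico s u) :=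
    MeasurableSet.univ_pi fun i => by split <;> exact measurableSet_Ico
  rw [hset, hmp.measure_preimage hm.nullMeasurableSet, volume_pi_pi, Fin.prod_univ_two]
  simp [Real.volume_Ico]

lemma measurable_box (p q s u : ℝ) :
    MeasurableSet {x : Pt | x 0 ∈ Ico p q ∧ x 1 ∈ Ico s u} := by
  have m0 := measurable_coord 0
  have m1 := measurable_coord 1
  exact (((measurableSet_le measurable_const m0).inter (measurableSet_lt m0 measurable_const)).inter
    ((measurableSet_le measurable_const m1).inter (measurableSet_lt m1 measurable_const)))

lemma vol_boxpair (p q s u e f g h : ℝ) :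
    volume {w : Pt × Pt | (w.1 0 ∈ Ico p q ∧ w.1 1 ∈ Ico s u) ∧
        (w.2 0 ∈ Ico e f ∧ w.2 1 ∈ Ico g h)}
      = (ENNReal.ofReal (q - p) * ENNReal.ofReal (u - s)) *
        (ENNReal.ofReal (f - e) * ENNReal.ofReal (h - g)) := by
  have : {w : Pt × Pt | (w.1 0 ∈ Ico p q ∧ w.1 1 ∈ Ico s u) ∧
        (w.2 0 ∈ Ico e f ∧ w.2 1 ∈ Ico g h)}
      = ({x : Pt | x 0 ∈ Ico p q ∧ x 1 ∈ Ico s u} ×ˢ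
          {x : Pt | x 0 ∈ Ico e f ∧ x 1 ∈ Ico g h}) := rfl
  rw [this, MeasureTheory.Measure.volume_eq_prod, Measure.prod_prod, vol_box, vol_box]

lemma measurable_boxpair (p q s u e f g h : ℝ) :
    MeasurableSet {w : Pt × Pt | (w.1 0 ∈ Ico p q ∧ w.1 1 ∈ Ico s u) ∧
        (w.2 0 ∈ Ico e f ∧ w.2 1 ∈ Ico g h)} := by
  have : {w : Pt × Pt | (w.1 0 ∈ Ico p q ∧ w.1 1 ∈ Ico s u) ∧
        (w.2 0 ∈ Ico e f ∧ w.2 1 ∈ Ico g h)}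
      = ({x : Pt | x 0 ∈ Ico p q ∧ x 1 ∈ Ico s u} ×ˢ
          {x : Pt | x 0 ∈ Ico e f ∧ x 1 ∈ Ico g h}) := rfl
  rw [this]
  exact (measurable_box p q s u).prod (measurable_box e f g h)

lemma measurable_shearpair (p q s u e f α β : ℝ) :
    MeasurableSet {w : Pt × Pt | (w.1 0 ∈ Ico p q ∧ w.1 1 ∈ Ico s u) ∧
      w.2 0 ∈ Ico e f ∧ w.2 1 ∈ Ico (w.1 1 - β) (w.1 1 - α)} := by
  have m10 : Measurable fun w : Pt × Pt => w.1 0 := (measurable_coord 0).comp measurable_fst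
  have m11 : Measurable fun w : Pt × Pt => w.1 1 := (measurable_coord 1).comp measurable_fst
  have m20 : Measurable fun w : Pt × Pt => w.2 0 := (measurable_coord 0).comp measurable_snd
  have m21 : Measurable fun w : Pt × Pt => w.2 1 := (measurable_coord 1).comp measurable_snd
  refine MeasurableSet.inter ?_ (MeasurableSet.inter ?_ ?_)
  · exact ((measurableSet_le measurable_const m10).inter
      (measurableSet_lt m10 measurable_const)).inter
      ((measurableSet_le measurable_const m11).inter (measurableSet_lt m11 measurable_const))
  · exact (measurableSet_le measurable_const m20).inter (measurableSet_lt m20 measurable_const)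
  · exact (measurableSet_le (m11.sub measurable_const) m21).inter
      (measurableSet_lt m21 (m11.sub measurable_const))

lemma vol_shear (p q s u e f α β : ℝ) :
    volume {w : Pt × Pt | (w.1 0 ∈ Ico p q ∧ w.1 1 ∈ Ico s u) ∧
      w.2 0 ∈ Ico e f ∧ w.2 1 ∈ Ico (w.1 1 - β) (w.1 1 - α)}
    = (ENNReal.ofReal (q - p) * ENNReal.ofReal (u - s)) *
      (ENNReal.ofReal (f - e) * ENNReal.ofReal (β - α)) := by
  have hS := measurable_shearpair p q s u e f α β
  rw [show (volume : Measure (Pt × Pt)) = (volume : Measure Pt).prod volume from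
    MeasureTheory.Measure.volume_eq_prod Pt Pt, Measure.prod_apply hS]
  have hslice : ∀ x : Pt,
      volume (Prod.mk x ⁻¹' {w : Pt × Pt | (w.1 0 ∈ Ico p q ∧ w.1 1 ∈ Ico s u) ∧
        w.2 0 ∈ Ico e f ∧ w.2 1 ∈ Ico (w.1 1 - β) (w.1 1 - α)})
      = Set.indicator {x : Pt | x 0 ∈ Ico p q ∧ x 1 ∈ Ico s u}
          (fun _ => ENNReal.ofReal (f - e) * ENNReal.ofReal (β - α)) x := by
    intro x
    by_cases hx : x ∈ {x : Pt | x 0 ∈ Ico p q ∧ x 1 ∈ Ico s u}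
    · have : Prod.mk x ⁻¹' {w : Pt × Pt | (w.1 0 ∈ Ico p q ∧ w.1 1 ∈ Ico s u) ∧
          w.2 0 ∈ Ico e f ∧ w.2 1 ∈ Ico (w.1 1 - β) (w.1 1 - α)}
          = {y : Pt | y 0 ∈ Ico e f ∧ y 1 ∈ Ico (x 1 - β) (x 1 - α)} := by
        ext y
        simp only [Set.mem_preimage, Set.mem_setOf_eq, Set.mem_setOf_eq] at *
        exact ⟨fun h => h.2, fun h => ⟨hx, h⟩⟩
      rw [this, vol_box, Set.indicator_of_mem hx]
      congr 1
      congr 1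
      ring
    · have : Prod.mk x ⁻¹' {w : Pt × Pt | (w.1 0 ∈ Ico p q ∧ w.1 1 ∈ Ico s u) ∧
          w.2 0 ∈ Ico e f ∧ w.2 1 ∈ Ico (w.1 1 - β) (w.1 1 - α)} = ∅ := by
        ext y
        simp only [Set.mem_preimage, Set.mem_setOf_eq, Set.mem_empty_iff_false, iff_false]
        exact fun h => hx h.1
      rw [this, Set.indicator_of_notMem hx, measure_empty]
  simp_rw [hslice]
  rw [lintegral_indicator_const (measurable_box p q s u), vol_box]
  ring

lemma total_lower (E U : Set (Pt × Pt)) (hU : MeasurableSet U) (hUE : U ⊆ E)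
    (hU' : Prod.swap ⁻¹' U ⊆ E) (hdisj : Disjoint U (Prod.swap ⁻¹' U)) :
    2 * volume U ≤ volume E := by
  have hswap : MeasurePreserving (Prod.swap : Pt × Pt → Pt × Pt)
      ((volume : Measure Pt).prod volume) ((volume : Measure Pt).prod volume) :=
    Measure.measurePreserving_swap
  have hvol' : volume (Prod.swap ⁻¹' U) = volume U := by
    rw [MeasureTheory.Measure.volume_eq_prod]
    exact hswap.measure_preimage hU.nullMeasurableSet
  have hU'm : MeasurableSet (Prod.swap ⁻¹' U) := hU.preimage measurable_swap
  calc 2 * volume U = volume U + volume (Prod.swap ⁻¹' U) := by rw [hvol']; ring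
    _ = volume (U ∪ Prod.swap ⁻¹' U) := (measure_union hdisj hU'm).symm
    _ ≤ volume E := measure_mono (Set.union_subset hUE hU')

/-! ### Membership lemmas -/

lemma key_ineq (a b v0 v1 x1 y1 x2 y2 : ℝ) (ha : 0 < a) (hab : a ≤ b)
    (hv0 : 0 ≤ v0) (hv1 : 0 ≤ v1) (hvab : a * b ≤ v0 * b + v1 * a)
    (hx2 : 0 ≤ x2) (hy2 : 0 ≤ y2) (hd1 : x2 ≤ x1) (hd2 : y2 ≤ y1)
    (hI : (y1 - y2) * (y1 + y2) ≤ (x1 - x2) * (2 * a - x1 - x2))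
    (hII : (x1 - x2) * (x1 + x2) ≤ (y1 - y2) * (2 * b - y1 - y2)) :
    (v0 - x1) ^ 2 + (v1 - y1) ^ 2 ≤ (v0 - x2) ^ 2 + (v1 - y2) ^ 2 := by
  have hb : 0 < b := lt_of_lt_of_le ha hab
  have hR : 0 ≤ (x1 - x2) * (x1 + x2) + (y1 - y2) * (y1 + y2) := by
    have := mul_nonneg (sub_nonneg.2 hd1) (by linarith : 0 ≤ x1 + x2)
    have := mul_nonneg (sub_nonneg.2 hd2) (by linarith : 0 ≤ y1 + y2)
    linarith
  have h1 : 0 ≤ v0 * b * (2 * a * (x1 - x2) -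
      ((x1 - x2) * (x1 + x2) + (y1 - y2) * (y1 + y2))) :=
    mul_nonneg (mul_nonneg hv0 hb.le) (by nlinarith)
  have h2 : 0 ≤ v1 * a * (2 * b * (y1 - y2) -
      ((x1 - x2) * (x1 + x2) + (y1 - y2) * (y1 + y2))) :=
    mul_nonneg (mul_nonneg hv1 ha.le) (by nlinarith)
  have h3 : 0 ≤ (v0 * b + v1 * a - a * b) *
      ((x1 - x2) * (x1 + x2) + (y1 - y2) * (y1 + y2)) :=
    mul_nonneg (by linarith) hR
  have hab' : 0 < a * b := mul_pos ha hb
  nlinarith [h1, h2, h3, hab']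

lemma mem_acc (a b : ℝ) (ha : 0 < a) (hab : a ≤ b) (hb : b ≤ 1) (w₁ w₂ : Pt)
    (h10 : w₁ 0 ∈ Icc (0:ℝ) 1) (h11 : w₁ 1 ∈ Icc (0:ℝ) 1)
    (h20 : w₂ 0 ∈ Icc (0:ℝ) 1) (h21 : w₂ 1 ∈ Icc (0:ℝ) 1)
    (hJ : w₁ 0 / a + w₁ 1 / b ≤ 1)
    (hd1 : w₂ 0 ≤ w₁ 0) (hd2 : w₂ 1 ≤ w₁ 1)
    (hI : (w₁ 1 - w₂ 1) * (w₁ 1 + w₂ 1) ≤ (w₁ 0 - w₂ 0) * (2*a - w₁ 0 - w₂ 0))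
    (hII : (w₁ 0 - w₂ 0) * (w₁ 0 + w₂ 0) ≤ (w₁ 1 - w₂ 1) * (2*b - w₁ 1 - w₂ 1)) :
    (w₁, w₂) ∈ accEvent unitSquare {x ∈ unitSquare | x 0 / a + x 1 / b ≤ 1}
      (closure (unitSquare \ {x ∈ unitSquare | x 0 / a + x 1 / b ≤ 1})) := by
  have hb0 : 0 < b := lt_of_lt_of_le ha hab
  have hw₁ : w₁ ∈ unitSquare := by
    intro i; fin_cases i <;> assumption
  have hw₂ : w₂ ∈ unitSquare := by
    intro i; fin_cases i <;> assumption
  have hcont : ∀ i : Fin 2, Continuous fun v : Pt => v i := fun i =>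
    (continuous_apply i).comp (EuclideanSpace.equiv (Fin 2) ℝ).continuous
  refine ⟨hw₁, hw₂, Or.inl ⟨⟨hw₁, hJ⟩, ?_⟩⟩
  intro v hv
  have hvC : (∀ i, v i ∈ Icc (0:ℝ) 1) ∧ 1 ≤ v 0 / a + v 1 / b := by
    have hclosed : IsClosed {v : Pt | (∀ i, v i ∈ Icc (0:ℝ) 1) ∧ 1 ≤ v 0 / a + v 1 / b} := by
      apply IsClosed.inter
      · show IsClosed {v : Pt | ∀ i, v i ∈ Icc (0:ℝ) 1}
        rw [Set.setOf_forall]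
        exact isClosed_iInter fun i => IsClosed.preimage (hcont i) isClosed_Icc
      · exact isClosed_le continuous_const
          (((hcont 0).div_const a).add ((hcont 1).div_const b))
    refine closure_minimal ?_ hclosed hv
    rintro z ⟨hz1, hz2⟩
    refine ⟨hz1, ?_⟩
    by_contra hlt
    exact hz2 ⟨hz1, le_of_not_gt fun h => hlt (le_of_lt h)⟩
  obtain ⟨hvsq, hvab⟩ := hvC
  refine ⟨hvsq, ?_⟩
  rw [EuclideanSpace.dist_eq, EuclideanSpace.dist_eq]
  apply Real.sqrt_le_sqrt
  rw [Fin.sum_univ_two, Fin.sum_univ_two]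
  rw [Real.dist_eq, Real.dist_eq, Real.dist_eq, Real.dist_eq, sq_abs, sq_abs, sq_abs, sq_abs]
  have hv0 : 0 ≤ v 0 := (hvsq 0).1
  have hv1 : 0 ≤ v 1 := (hvsq 1).1
  have hvab' : a * b ≤ v 0 * b + v 1 * a := by
    have h := hvab
    rw [div_add_div _ _ (ne_of_gt ha) (ne_of_gt hb0), le_div_iff₀ (mul_pos ha hb0)] at h
    nlinarith [h]
  exact key_ineq a b (v 0) (v 1) (w₁ 0) (w₁ 1) (w₂ 0) (w₂ 1) ha hab hv0 hv1 hvab'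
    h20.1 h21.1 hd1 hd2 hI hII

lemma acc_swap_mem {K H A : Set Pt} {w : Pt × Pt}
    (h : (w.2, w.1) ∈ accEvent K H A) : w ∈ accEvent K H A := by
  obtain ⟨h1, h2, h3⟩ := h
  exact ⟨h2, h1, h3.symm⟩

/-- product box sufficiency -/
lemma box_subset_acc (a b p q s u r σ : ℝ) (ha : 0 < a) (hab : a ≤ b) (hb : b ≤ 1)
    (hr : 0 ≤ r) (hσ : 0 ≤ σ) (hrp : r ≤ p) (hσs : σ ≤ s)
    (hpq : p ≤ q) (hsu : s ≤ u) (hq1 : q ≤ 1) (hu1 : u ≤ 1)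
    (hJ : q / a + u / b ≤ 1)
    (h2a : q + r ≤ 2 * a) (h2b : u + σ ≤ 2 * b)
    (hI : u * (u + σ) ≤ (p - r) * (2 * a - q - r))
    (hII : q * (q + r) ≤ (s - σ) * (2 * b - u - σ)) :
    ∀ w : Pt × Pt, (w.1 0 ∈ Ico p q ∧ w.1 1 ∈ Ico s u) →
      (w.2 0 ∈ Ico 0 r ∧ w.2 1 ∈ Ico 0 σ) →
      w ∈ accEvent unitSquare {x ∈ unitSquare | x 0 / a + x 1 / b ≤ 1}
        (closure (unitSquare \ {x ∈ unitSquare | x 0 / a + x 1 / b ≤ 1})) := by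
  rintro ⟨w₁, w₂⟩ ⟨⟨hx1l, hx1u⟩, hy1l, hy1u⟩ ⟨⟨hx2l, hx2u⟩, hy2l, hy2u⟩
  have hb0 : 0 < b := lt_of_lt_of_le ha hab
  have h0p : 0 ≤ p := le_trans hr hrp
  have h0s : 0 ≤ s := le_trans hσ hσs
  apply mem_acc a b ha hab hb
  · exact ⟨by linarith, by linarith⟩
  · exact ⟨by linarith, by linarith⟩
  · exact ⟨by linarith, by linarith⟩
  · exact ⟨by linarith, by linarith⟩
  · have h1 : w₁ 0 / a ≤ q / a := by gcongr
    have h2 : w₁ 1 / b ≤ u / b := by gcongr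
    linarith
  · linarith
  · linarith
  · have e1 : (w₁ 1 - w₂ 1) * (w₁ 1 + w₂ 1) ≤ u * (u + σ) :=
      mul_le_mul (by linarith) (by linarith) (by linarith) (by linarith)
    have e2 : (p - r) * (2 * a - q - r) ≤ (w₁ 0 - w₂ 0) * (2 * a - w₁ 0 - w₂ 0) :=
      mul_le_mul (by linarith) (by linarith) (by linarith) (by linarith)
    linarith
  · have e1 : (w₁ 0 - w₂ 0) * (w₁ 0 + w₂ 0) ≤ q * (q + r) :=
      mul_le_mul (by linarith) (by linarith) (by linarith) (by linarith)
    have e2 : (s - σ) * (2 * b - u - σ) ≤ (w₁ 1 - w₂ 1) * (2 * b - w₁ 1 - w₂ 1) :=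
      mul_le_mul (by linarith) (by linarith) (by linarith) (by linarith)
    linarith

/-- sheared strip sufficiency -/
lemma shear_subset_acc (a b p q s u r α β : ℝ) (ha : 0 < a) (hab : a ≤ b) (hb : b ≤ 1)
    (hr : 0 ≤ r) (hrp : r ≤ p) (hα : 0 < α) (hαβ : α ≤ β) (hβs : β ≤ s)
    (hpq : p ≤ q) (hsu : s ≤ u) (hq1 : q ≤ 1) (hu1 : u ≤ 1)
    (hJ : q / a + u / b ≤ 1)
    (h2a : q + r ≤ 2 * a) (h2b : u ≤ b)
    (hI : β * (2 * u) ≤ (p - r) * (2 * a - q - r))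
    (hII : q * (q + r) ≤ α * (2 * b - 2 * u)) :
    ∀ w : Pt × Pt, (w.1 0 ∈ Ico p q ∧ w.1 1 ∈ Ico s u) →
      (w.2 0 ∈ Ico 0 r ∧ w.2 1 ∈ Ico (w.1 1 - β) (w.1 1 - α)) →
      w ∈ accEvent unitSquare {x ∈ unitSquare | x 0 / a + x 1 / b ≤ 1}
        (closure (unitSquare \ {x ∈ unitSquare | x 0 / a + x 1 / b ≤ 1})) := by
  rintro ⟨w₁, w₂⟩ ⟨⟨hx1l, hx1u⟩, hy1l, hy1u⟩ ⟨⟨hx2l, hx2u⟩, hy2l, hy2u⟩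
  have hb0 : 0 < b := lt_of_lt_of_le ha hab
  have h0p : 0 ≤ p := le_trans hr hrp
  have h0s : 0 ≤ s := le_trans (le_trans hα.le hαβ) hβs
  apply mem_acc a b ha hab hb
  · exact ⟨by linarith, by linarith⟩
  · exact ⟨by linarith, by linarith⟩
  · exact ⟨by linarith, by linarith⟩
  · exact ⟨by linarith, by linarith⟩
  · have h1 : w₁ 0 / a ≤ q / a := by gcongr
    have h2 : w₁ 1 / b ≤ u / b := by gcongr
    linarith
  · linarith
  · linarith
  · have e1 : (w₁ 1 - w₂ 1) * (w₁ 1 + w₂ 1) ≤ β * (2 * u) :=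
      mul_le_mul (by linarith) (by linarith) (by linarith) (by linarith)
    have e2 : (p - r) * (2 * a - q - r) ≤ (w₁ 0 - w₂ 0) * (2 * a - w₁ 0 - w₂ 0) :=
      mul_le_mul (by linarith) (by linarith) (by linarith) (by linarith)
    linarith
  · have e1 : (w₁ 0 - w₂ 0) * (w₁ 0 + w₂ 0) ≤ q * (q + r) :=
      mul_le_mul (by linarith) (by linarith) (by linarith) (by linarith)
    have e2 : α * (2 * b - 2 * u) ≤ (w₁ 1 - w₂ 1) * (2 * b - w₁ 1 - w₂ 1) :=
      mul_le_mul (by linarith) (by linarith) (by linarith) (by linarith)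
    linarith

end

set_option maxHeartbeats 4000000 in
/-- Let `0 < a ≤ b ≤ 1` and let
`J_{a,b} = {(x,y) ∈ ℍ : x/a + y/b ≤ 1}` be a triangular cap of the unit square `ℍ` with
perpendicular side lengths `a` and `b`. Then the probability (over two i.i.d. uniform
candidates on `ℍ`) that a candidate inside `J_{a,b}` is accepted, given that the convex
hull of the group equals the complementary cap `closure (ℍ \ J_{a,b})`, is at least
`(1/2¹¹)·a⁴·(1 + ln (b/a))`. -/
theorem accEvent_triangularCap_volume_ge
    (a b : ℝ) (ha : 0 < a) (hab : a ≤ b) (hb : b ≤ 1) :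
    ENNReal.ofReal ((1 / 2 ^ 11) * a ^ 4 * (1 + Real.log (b / a))) ≤
      volume (accEvent unitSquare {x ∈ unitSquare | x 0 / a + x 1 / b ≤ 1}
        (closure (unitSquare \ {x ∈ unitSquare | x 0 / a + x 1 / b ≤ 1}))) := by
  rcases le_or_gt b (36/25 * a) with hA | hA
  ·
    have hb0 : 0 < b := lt_of_lt_of_le ha hab
    have ha1 : a ≤ 1 := le_trans hab hb
    set E := accEvent unitSquare {x ∈ unitSquare | x 0 / a + x 1 / b ≤ 1}
        (closure (unitSquare \ {x ∈ unitSquare | x 0 / a + x 1 / b ≤ 1})) with hE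
    set U : Set (Pt × Pt) := {w | (w.1 0 ∈ Ico (a/3) (a/2) ∧ w.1 1 ∈ Ico (a/3) (a/2)) ∧
        (w.2 0 ∈ Ico 0 (9*a/80) ∧ w.2 1 ∈ Ico 0 (9*a/80))} with hU
    have hUsub : U ⊆ E := by
      rintro w ⟨h1, h2⟩
      have hJ' : (a/2) / a + (a/2) / b ≤ 1 := by
        have e1 : (a/2)/a = 1/2 := by field_simp
        have e2 : (a/2)/b ≤ 1/2 := by rw [div_le_iff₀ hb0]; linarith
        linarith
      have hI' : (a/2) * (a/2 + 9*a/80) ≤ (a/3 - 9*a/80) * (2*a - a/2 - 9*a/80) := by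
        nlinarith [mul_pos ha ha]
      have hII' : (a/2) * (a/2 + 9*a/80) ≤ (a/3 - 9*a/80) * (2*b - a/2 - 9*a/80) := by
        nlinarith [mul_nonneg (sub_nonneg.2 hab) ha.le, mul_pos ha ha]
      exact box_subset_acc a b (a/3) (a/2) (a/3) (a/2) (9*a/80) (9*a/80) ha hab hb
        (by linarith) (by linarith) (by linarith) (by linarith) (by linarith) (by linarith)
        (by linarith) (by linarith) hJ' (by linarith) (by linarith) hI' hII' w h1 h2
    have hUsub' : Prod.swap ⁻¹' U ⊆ E := by
      intro w hw
      exact acc_swap_mem (hUsub hw)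
    have hdisj : Disjoint U (Prod.swap ⁻¹' U) := by
      rw [Set.disjoint_left]
      rintro w ⟨⟨_, hy1, _⟩, _, _, hy2u⟩ ⟨⟨_, hy1', _⟩, _, _, hy2u'⟩
      simp only [Prod.fst_swap, Prod.snd_swap] at hy1' hy2u'
      have : (9:ℝ)*a/80 < a/3 := by linarith
      linarith
    have hUm : MeasurableSet U := measurable_boxpair _ _ _ _ _ _ _ _
    have hlow : 2 * volume U ≤ volume E := total_lower E U hUm hUsub hUsub' hdisj
    refine le_trans ?_ hlow
    rw [hU, vol_boxpair]
    have hL : Real.log (b/a) ≤ 11/25 := by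
      have h1 : Real.log (b/a) ≤ b/a - 1 := Real.log_le_sub_one_of_pos (by positivity)
      have h2 : b/a ≤ 36/25 := by rw [div_le_iff₀ ha]; linarith
      linarith
    have hreal : (1 / 2 ^ 11) * a ^ 4 * (1 + Real.log (b / a))
        ≤ 2 * ((a/2 - a/3) * (a/2 - a/3) * ((9*a/80 - 0) * (9*a/80 - 0))) := by
      nlinarith [pow_nonneg ha.le 4, hL]
    calc ENNReal.ofReal ((1 / 2 ^ 11) * a ^ 4 * (1 + Real.log (b / a)))
        ≤ ENNReal.ofReal (2 * ((a/2 - a/3) * (a/2 - a/3) * ((9*a/80 - 0) * (9*a/80 - 0)))) :=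
          ENNReal.ofReal_le_ofReal hreal
      _ = 2 * ((ENNReal.ofReal (a/2 - a/3) * ENNReal.ofReal (a/2 - a/3)) *
          (ENNReal.ofReal (9*a/80 - 0) * ENNReal.ofReal (9*a/80 - 0))) := by
          rw [ENNReal.ofReal_mul (by norm_num : (0:ℝ) ≤ 2),
            ENNReal.ofReal_mul (mul_nonneg (by linarith : (0:ℝ) ≤ a/2 - a/3) (by linarith : (0:ℝ) ≤ a/2 - a/3)),
            ENNReal.ofReal_mul (by linarith : (0:ℝ) ≤ a/2 - a/3),
            ENNReal.ofReal_mul (by linarith : (0:ℝ) ≤ 9*a/80 - 0),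
            ENNReal.ofReal_ofNat]
  rcases le_or_gt b (2 * a) with hB1u | hB2l
  · have hB1l := hA
    have hb0 : 0 < b := lt_of_lt_of_le ha hab
    have ha1 : a ≤ 1 := le_trans hab hb
    set E := accEvent unitSquare {x ∈ unitSquare | x 0 / a + x 1 / b ≤ 1}
        (closure (unitSquare \ {x ∈ unitSquare | x 0 / a + x 1 / b ≤ 1})) with hE
    set B : Set (Pt × Pt) := {w : Pt × Pt | (w.1 0 ∈ Ico (a/3) (a/2) ∧ w.1 1 ∈ Ico (a/3) (a/2)) ∧
        (w.2 0 ∈ Ico 0 (9*a/80) ∧ w.2 1 ∈ Ico 0 (9*a/80))} with hB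
    set B2 : Set (Pt × Pt) := {w : Pt × Pt | (w.1 0 ∈ Ico (a/2) (19*a/32) ∧ w.1 1 ∈ Ico (a/2) (9*a/16)) ∧
        (w.2 0 ∈ Ico 0 (3*a/32) ∧ w.2 1 ∈ Ico 0 (a/4))} with hB2
    have hBsub : B ⊆ E := by
      rintro w ⟨h1, h2⟩
      have hJ' : (a/2) / a + (a/2) / b ≤ 1 := by
        have e1 : (a/2)/a = 1/2 := by field_simp
        have e2 : (a/2)/b ≤ 1/2 := by rw [div_le_iff₀ hb0]; linarith
        linarith
      have hI' : (a/2) * (a/2 + 9*a/80) ≤ (a/3 - 9*a/80) * (2*a - a/2 - 9*a/80) := by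
        nlinarith [mul_pos ha ha]
      have hII' : (a/2) * (a/2 + 9*a/80) ≤ (a/3 - 9*a/80) * (2*b - a/2 - 9*a/80) := by
        nlinarith [mul_nonneg (sub_nonneg.2 hab) ha.le, mul_pos ha ha]
      exact box_subset_acc a b (a/3) (a/2) (a/3) (a/2) (9*a/80) (9*a/80) ha hab hb
        (by linarith) (by linarith) (by linarith) (by linarith) (by linarith) (by linarith)
        (by linarith) (by linarith) hJ' (by linarith) (by linarith) hI' hII' w h1 h2
    have hB2sub : B2 ⊆ E := by
      rintro w ⟨h1, h2⟩
      have hJ' : (19*a/32) / a + (9*a/16) / b ≤ 1 := by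
        have e1 : (19*a/32)/a = 19/32 := by field_simp
        have e2 : (9*a/16)/b ≤ 25/64 := by rw [div_le_iff₀ hb0]; nlinarith
        linarith
      have hI' : (9*a/16) * (9*a/16 + a/4) ≤ (a/2 - 3*a/32) * (2*a - 19*a/32 - 3*a/32) := by
        nlinarith [mul_pos ha ha]
      have hII' : (19*a/32) * (19*a/32 + 3*a/32) ≤ (a/2 - a/4) * (2*b - 9*a/16 - a/4) := by
        nlinarith [mul_pos ha ha, mul_nonneg ha.le (by linarith : (0:ℝ) ≤ b - 36/25*a)]
      exact box_subset_acc a b (a/2) (19*a/32) (a/2) (9*a/16) (3*a/32) (a/4) ha hab hb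
        (by linarith) (by linarith) (by linarith) (by linarith) (by linarith) (by linarith)
        (by linarith) (by linarith) hJ' (by linarith) (by linarith) hI' hII' w h1 h2
    set U : Set (Pt × Pt) := B ∪ B2 with hUdef
    have hUsub : U ⊆ E := Set.union_subset hBsub hB2sub
    have hUsub' : Prod.swap ⁻¹' U ⊆ E := fun w hw => acc_swap_mem (hUsub hw)
    have hUlow : ∀ w ∈ U, w.2 1 < w.1 1 := by
      rintro w (hw | hw)
      · obtain ⟨⟨_, hy1, _⟩, _, _, hy2⟩ := hw
        have : (9:ℝ)*a/80 < a/3 := by linarith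
        linarith
      · obtain ⟨⟨_, hy1, _⟩, _, _, hy2⟩ := hw
        linarith
    have hdisj : Disjoint U (Prod.swap ⁻¹' U) := by
      rw [Set.disjoint_left]
      intro w hw hw'
      have h1 := hUlow w hw
      have h2 := hUlow _ hw'
      simp only [Prod.fst_swap, Prod.snd_swap] at h2
      linarith
    have hUm : MeasurableSet U :=
      (measurable_boxpair _ _ _ _ _ _ _ _).union (measurable_boxpair _ _ _ _ _ _ _ _)
    have hlow : 2 * volume U ≤ volume E := total_lower E U hUm hUsub hUsub' hdisj
    have hdBB2 : Disjoint B B2 := by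
      rw [Set.disjoint_left]
      rintro w ⟨⟨_, _, hy1⟩, _⟩ ⟨⟨_, hy1', _⟩, _⟩
      linarith
    have hvolU : volume U = volume B + volume B2 :=
      measure_union hdBB2 (measurable_boxpair _ _ _ _ _ _ _ _)
    have hvolB : volume B = ENNReal.ofReal ((a/2 - a/3) * (a/2 - a/3) * ((9*a/80 - 0) * (9*a/80 - 0))) := by
      rw [hB, vol_boxpair,
        ENNReal.ofReal_mul (mul_nonneg (by linarith : (0:ℝ) ≤ a/2 - a/3) (by linarith : (0:ℝ) ≤ a/2 - a/3)),
        ENNReal.ofReal_mul (by linarith : (0:ℝ) ≤ a/2 - a/3),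
        ENNReal.ofReal_mul (by linarith : (0:ℝ) ≤ 9*a/80 - 0)]
    have hvolB2 : volume B2 = ENNReal.ofReal ((19*a/32 - a/2) * (9*a/16 - a/2) * ((3*a/32 - 0) * (a/4 - 0))) := by
      rw [hB2, vol_boxpair,
        ENNReal.ofReal_mul (mul_nonneg (by linarith : (0:ℝ) ≤ 19*a/32 - a/2) (by linarith : (0:ℝ) ≤ 9*a/16 - a/2)),
        ENNReal.ofReal_mul (by linarith : (0:ℝ) ≤ 19*a/32 - a/2),
        ENNReal.ofReal_mul (by linarith : (0:ℝ) ≤ 3*a/32 - 0)]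
    have hL : Real.log (b/a) ≤ 1 := by
      have h1 : Real.log (b/a) ≤ b/a - 1 := Real.log_le_sub_one_of_pos (by positivity)
      have h2 : b/a ≤ 2 := by rw [div_le_iff₀ ha]; linarith
      linarith
    have hreal : (1 / 2 ^ 11) * a ^ 4 * (1 + Real.log (b / a))
        ≤ 2 * ((a/2 - a/3) * (a/2 - a/3) * ((9*a/80 - 0) * (9*a/80 - 0))
           + (19*a/32 - a/2) * (9*a/16 - a/2) * ((3*a/32 - 0) * (a/4 - 0))) := by
      nlinarith [mul_nonneg (pow_nonneg ha.le 4) (by linarith : (0:ℝ) ≤ 2 - (1 + Real.log (b/a)))]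
    refine le_trans ?_ hlow
    rw [hvolU, hvolB, hvolB2]
    calc ENNReal.ofReal ((1 / 2 ^ 11) * a ^ 4 * (1 + Real.log (b / a)))
        ≤ ENNReal.ofReal (2 * ((a/2 - a/3) * (a/2 - a/3) * ((9*a/80 - 0) * (9*a/80 - 0))
           + (19*a/32 - a/2) * (9*a/16 - a/2) * ((3*a/32 - 0) * (a/4 - 0)))) :=
          ENNReal.ofReal_le_ofReal hreal
      _ = 2 * (ENNReal.ofReal ((a/2 - a/3) * (a/2 - a/3) * ((9*a/80 - 0) * (9*a/80 - 0)))
          + ENNReal.ofReal ((19*a/32 - a/2) * (9*a/16 - a/2) * ((3*a/32 - 0) * (a/4 - 0)))) := by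
          rw [ENNReal.ofReal_mul (by norm_num : (0:ℝ) ≤ 2),
            ENNReal.ofReal_add
              (mul_nonneg (mul_nonneg (by linarith : (0:ℝ) ≤ a/2 - a/3) (by linarith : (0:ℝ) ≤ a/2 - a/3))
                (mul_nonneg (by linarith : (0:ℝ) ≤ 9*a/80 - 0) (by linarith : (0:ℝ) ≤ 9*a/80 - 0)))
              (mul_nonneg (mul_nonneg (by linarith : (0:ℝ) ≤ 19*a/32 - a/2) (by linarith : (0:ℝ) ≤ 9*a/16 - a/2))
                (mul_nonneg (by linarith : (0:ℝ) ≤ 3*a/32 - 0) (by linarith : (0:ℝ) ≤ a/4 - 0))),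
            ENNReal.ofReal_ofNat]
  rcases le_or_gt b (4 * a) with hB2u | hC
  ·
    have hb0 : 0 < b := lt_of_lt_of_le ha hab
    have ha1 : a ≤ 1 := le_trans hab hb
    set E := accEvent unitSquare {x ∈ unitSquare | x 0 / a + x 1 / b ≤ 1}
        (closure (unitSquare \ {x ∈ unitSquare | x 0 / a + x 1 / b ≤ 1})) with hE
    set B : Set (Pt × Pt) := {w : Pt × Pt | (w.1 0 ∈ Ico (a/3) (a/2) ∧ w.1 1 ∈ Ico (a/3) (a/2)) ∧
        (w.2 0 ∈ Ico 0 (9*a/80) ∧ w.2 1 ∈ Ico 0 (9*a/80))} with hB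
    set B2 : Set (Pt × Pt) := {w : Pt × Pt | (w.1 0 ∈ Ico (9*a/16) (11*a/16) ∧ w.1 1 ∈ Ico (a/2) (19*a/32)) ∧
        (w.2 0 ∈ Ico 0 (3*a/32) ∧ w.2 1 ∈ Ico 0 (a/4))} with hB2
    have hBsub : B ⊆ E := by
      rintro w ⟨h1, h2⟩
      have hJ' : (a/2) / a + (a/2) / b ≤ 1 := by
        have e1 : (a/2)/a = 1/2 := by field_simp
        have e2 : (a/2)/b ≤ 1/2 := by rw [div_le_iff₀ hb0]; linarith
        linarith
      have hI' : (a/2) * (a/2 + 9*a/80) ≤ (a/3 - 9*a/80) * (2*a - a/2 - 9*a/80) := by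
        nlinarith [mul_pos ha ha]
      have hII' : (a/2) * (a/2 + 9*a/80) ≤ (a/3 - 9*a/80) * (2*b - a/2 - 9*a/80) := by
        nlinarith [mul_nonneg (sub_nonneg.2 hab) ha.le, mul_pos ha ha]
      exact box_subset_acc a b (a/3) (a/2) (a/3) (a/2) (9*a/80) (9*a/80) ha hab hb
        (by linarith) (by linarith) (by linarith) (by linarith) (by linarith) (by linarith)
        (by linarith) (by linarith) hJ' (by linarith) (by linarith) hI' hII' w h1 h2
    have hB2sub : B2 ⊆ E := by
      rintro w ⟨h1, h2⟩
      have hJ' : (11*a/16) / a + (19*a/32) / b ≤ 1 := by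
        have e1 : (11*a/16)/a = 11/16 := by field_simp
        have e2 : (19*a/32)/b ≤ 19/64 := by rw [div_le_iff₀ hb0]; nlinarith
        linarith
      have hI' : (19*a/32) * (19*a/32 + a/4) ≤ (9*a/16 - 3*a/32) * (2*a - 11*a/16 - 3*a/32) := by
        nlinarith [mul_pos ha ha]
      have hII' : (11*a/16) * (11*a/16 + 3*a/32) ≤ (a/2 - a/4) * (2*b - 19*a/32 - a/4) := by
        nlinarith [mul_pos ha ha, mul_nonneg ha.le (by linarith : (0:ℝ) ≤ b - 2*a)]
      exact box_subset_acc a b (9*a/16) (11*a/16) (a/2) (19*a/32) (3*a/32) (a/4) ha hab hb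
        (by linarith) (by linarith) (by linarith) (by linarith) (by linarith) (by linarith)
        (by linarith) (by linarith) hJ' (by linarith) (by linarith) hI' hII' w h1 h2
    set U : Set (Pt × Pt) := B ∪ B2 with hUdef
    have hUsub : U ⊆ E := Set.union_subset hBsub hB2sub
    have hUsub' : Prod.swap ⁻¹' U ⊆ E := fun w hw => acc_swap_mem (hUsub hw)
    have hUlow : ∀ w ∈ U, w.2 1 < w.1 1 := by
      rintro w (hw | hw)
      · obtain ⟨⟨_, hy1, _⟩, _, _, hy2⟩ := hw
        have : (9:ℝ)*a/80 < a/3 := by linarith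
        linarith
      · obtain ⟨⟨_, hy1, _⟩, _, _, hy2⟩ := hw
        linarith
    have hdisj : Disjoint U (Prod.swap ⁻¹' U) := by
      rw [Set.disjoint_left]
      intro w hw hw'
      have h1 := hUlow w hw
      have h2 := hUlow _ hw'
      simp only [Prod.fst_swap, Prod.snd_swap] at h2
      linarith
    have hUm : MeasurableSet U :=
      (measurable_boxpair _ _ _ _ _ _ _ _).union (measurable_boxpair _ _ _ _ _ _ _ _)
    have hlow : 2 * volume U ≤ volume E := total_lower E U hUm hUsub hUsub' hdisj
    have hdBB2 : Disjoint B B2 := by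
      rw [Set.disjoint_left]
      rintro w ⟨⟨_, _, hy1⟩, _⟩ ⟨⟨_, hy1', _⟩, _⟩
      linarith
    have hvolU : volume U = volume B + volume B2 :=
      measure_union hdBB2 (measurable_boxpair _ _ _ _ _ _ _ _)
    have hvolB : volume B = ENNReal.ofReal ((a/2 - a/3) * (a/2 - a/3) * ((9*a/80 - 0) * (9*a/80 - 0))) := by
      rw [hB, vol_boxpair,
        ENNReal.ofReal_mul (mul_nonneg (by linarith : (0:ℝ) ≤ a/2 - a/3) (by linarith : (0:ℝ) ≤ a/2 - a/3)),
        ENNReal.ofReal_mul (by linarith : (0:ℝ) ≤ a/2 - a/3),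
        ENNReal.ofReal_mul (by linarith : (0:ℝ) ≤ 9*a/80 - 0)]
    have hvolB2 : volume B2 = ENNReal.ofReal ((11*a/16 - 9*a/16) * (19*a/32 - a/2) * ((3*a/32 - 0) * (a/4 - 0))) := by
      rw [hB2, vol_boxpair,
        ENNReal.ofReal_mul (mul_nonneg (by linarith : (0:ℝ) ≤ 11*a/16 - 9*a/16) (by linarith : (0:ℝ) ≤ 19*a/32 - a/2)),
        ENNReal.ofReal_mul (by linarith : (0:ℝ) ≤ 11*a/16 - 9*a/16),
        ENNReal.ofReal_mul (by linarith : (0:ℝ) ≤ 3*a/32 - 0)]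
    have hL : Real.log (b/a) ≤ 1.3862943616 := by
      have h2 : b/a ≤ 4 := by rw [div_le_iff₀ ha]; linarith
      have h3 : Real.log (b/a) ≤ Real.log 4 := Real.log_le_log (by positivity) h2
      have h4 : Real.log 4 = 2 * Real.log 2 := by
        rw [show (4:ℝ) = 2^2 by norm_num, Real.log_pow]
        push_cast; ring
      have h5 : Real.log 2 < 0.6931471808 := Real.log_two_lt_d9
      nlinarith [h3, h4, h5]
    have hreal : (1 / 2 ^ 11) * a ^ 4 * (1 + Real.log (b / a))
        ≤ 2 * ((a/2 - a/3) * (a/2 - a/3) * ((9*a/80 - 0) * (9*a/80 - 0))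
           + (11*a/16 - 9*a/16) * (19*a/32 - a/2) * ((3*a/32 - 0) * (a/4 - 0))) := by
      nlinarith [mul_nonneg (pow_nonneg ha.le 4)
        (by linarith : (0:ℝ) ≤ 2.3862943616 - (1 + Real.log (b/a)))]
    refine le_trans ?_ hlow
    rw [hvolU, hvolB, hvolB2]
    calc ENNReal.ofReal ((1 / 2 ^ 11) * a ^ 4 * (1 + Real.log (b / a)))
        ≤ ENNReal.ofReal (2 * ((a/2 - a/3) * (a/2 - a/3) * ((9*a/80 - 0) * (9*a/80 - 0))
           + (11*a/16 - 9*a/16) * (19*a/32 - a/2) * ((3*a/32 - 0) * (a/4 - 0)))) :=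
          ENNReal.ofReal_le_ofReal hreal
      _ = 2 * (ENNReal.ofReal ((a/2 - a/3) * (a/2 - a/3) * ((9*a/80 - 0) * (9*a/80 - 0)))
          + ENNReal.ofReal ((11*a/16 - 9*a/16) * (19*a/32 - a/2) * ((3*a/32 - 0) * (a/4 - 0)))) := by
          rw [ENNReal.ofReal_mul (by norm_num : (0:ℝ) ≤ 2),
            ENNReal.ofReal_add
              (mul_nonneg (mul_nonneg (by linarith : (0:ℝ) ≤ a/2 - a/3) (by linarith : (0:ℝ) ≤ a/2 - a/3))
                (mul_nonneg (by linarith : (0:ℝ) ≤ 9*a/80 - 0) (by linarith : (0:ℝ) ≤ 9*a/80 - 0)))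
              (mul_nonneg (mul_nonneg (by linarith : (0:ℝ) ≤ 11*a/16 - 9*a/16) (by linarith : (0:ℝ) ≤ 19*a/32 - a/2))
                (mul_nonneg (by linarith : (0:ℝ) ≤ 3*a/32 - 0) (by linarith : (0:ℝ) ≤ a/4 - 0))),
            ENNReal.ofReal_ofNat]
  ·
    have hb0 : 0 < b := lt_of_lt_of_le ha hab
    have ha1 : a ≤ 1 := le_trans hab hb
    set E := accEvent unitSquare {x ∈ unitSquare | x 0 / a + x 1 / b ≤ 1}
        (closure (unitSquare \ {x ∈ unitSquare | x 0 / a + x 1 / b ≤ 1})) with hE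
    set N : ℕ := Nat.floor (Real.logb 2 (b/(4*a))) + 1 with hN
    set t : ℕ → ℝ := fun j => a/2 * 2^j with ht
    set al : ℝ := 5*a^2/(24*b) with hal
    set be : ℕ → ℝ := fun j => 11*a^2/(256*(t j)) with hbe
    set S : ℕ → Set (Pt × Pt) := fun j => {w : Pt × Pt |
        (w.1 0 ∈ Ico (a/4) (a/2) ∧ w.1 1 ∈ Ico (t j) (2*(t j))) ∧
        (w.2 0 ∈ Ico 0 (a/8) ∧ w.2 1 ∈ Ico (w.1 1 - be j) (w.1 1 - al))} with hS
    set B : Set (Pt × Pt) := {w : Pt × Pt | (w.1 0 ∈ Ico (a/3) (a/2) ∧ w.1 1 ∈ Ico (a/3) (a/2)) ∧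
        (w.2 0 ∈ Ico 0 (9*a/80) ∧ w.2 1 ∈ Ico 0 (9*a/80))} with hB
    -- basic facts about t j for j < N
    have hx1 : (1:ℝ) ≤ b/(4*a) := by rw [le_div_iff₀ (by positivity)]; linarith
    have hlogb0 : 0 ≤ Real.logb 2 (b/(4*a)) := Real.logb_nonneg one_lt_two hx1
    have hpow : ∀ j, j < N → (2:ℝ)^j ≤ b/(4*a) := by
      intro j hj
      have hjle : (j:ℝ) ≤ Real.logb 2 (b/(4*a)) := by
        have h1 : j ≤ Nat.floor (Real.logb 2 (b/(4*a))) := Nat.lt_succ_iff.mp hj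
        exact le_trans (Nat.cast_le.2 h1) (Nat.floor_le hlogb0)
      calc (2:ℝ)^j = (2:ℝ)^((j:ℕ):ℝ) := (Real.rpow_natCast 2 j).symm
        _ ≤ (2:ℝ)^(Real.logb 2 (b/(4*a))) :=
            Real.rpow_le_rpow_of_exponent_le one_le_two hjle
        _ = b/(4*a) := Real.rpow_logb two_pos (by norm_num) (by positivity)
    have ht0 : ∀ j, 0 < t j := fun j => by positivity
    have htlb : ∀ j, a/2 ≤ t j := by
      intro j
      have h1 : (1:ℝ) ≤ 2^j := one_le_pow₀ (by norm_num)
      calc a/2 = a/2 * 1 := by ring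
        _ ≤ a/2 * 2^j := by
            apply mul_le_mul_of_nonneg_left h1 (by linarith)
    have htub : ∀ j, j < N → t j ≤ b/8 := by
      intro j hj
      have := hpow j hj
      calc t j = a/2 * 2^j := rfl
        _ ≤ a/2 * (b/(4*a)) := mul_le_mul_of_nonneg_left this (by linarith)
        _ = b/8 := by field_simp; ring
    -- each strip is inside the event
    have hSsub : ∀ j, j < N → S j ⊆ E := by
      intro j hj w hw
      obtain ⟨h1, h2⟩ := hw
      have ht0j := ht0 j
      have htlbj := htlb j
      have htubj := htub j hj
      have hαβ : al ≤ be j := by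
        rw [hal, hbe, div_le_div_iff₀ (by positivity) (by positivity)]
        nlinarith [mul_nonneg (sq_nonneg a) (by linarith : (0:ℝ) ≤ b/8 - t j),
          mul_nonneg (sq_nonneg a) hb0.le]
      have hβs : be j ≤ t j := by
        rw [hbe, div_le_iff₀ (by positivity)]
        nlinarith [mul_le_mul htlbj htlbj (by linarith) (ht0 j).le]
      have hJ' : (a/2)/a + (2*(t j))/b ≤ 1 := by
        have e1 : (a/2)/a = 1/2 := by field_simp
        have e2 : (2*(t j))/b ≤ 1/4 := by
          rw [div_le_iff₀ hb0]; linarith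
        linarith
      have hI' : be j * (2 * (2*(t j))) ≤ (a/4 - a/8) * (2*a - a/2 - a/8) := by
        have eL : be j * (2 * (2*(t j))) = 11*a^2/64 := by
          rw [hbe]; field_simp; ring
        have eR : (a/4 - a/8) * (2*a - a/2 - a/8) = 11*a^2/64 := by ring
        rw [eL, eR]
      have hII' : (a/2) * (a/2 + a/8) ≤ al * (2*b - 2*(2*(t j))) := by
        have e1 : al * (3/2*b) = 5*a^2/16 := by rw [hal]; field_simp; ring
        have e2 : al * (3/2*b) ≤ al * (2*b - 2*(2*(t j))) := by
          apply mul_le_mul_of_nonneg_left (by linarith) (by positivity)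
        nlinarith [e1, e2]
      exact shear_subset_acc a b (a/4) (a/2) (t j) (2*(t j)) (a/8) al (be j) ha hab hb
        (by linarith) (by linarith) (by positivity) hαβ hβs (by linarith) (by linarith)
        (by linarith) (by linarith) hJ' (by linarith) (by linarith) hI' hII' w h1 h2
    -- the base box is inside the event
    have hBsub : B ⊆ E := by
      rintro w ⟨h1, h2⟩
      have hJ' : (a/2) / a + (a/2) / b ≤ 1 := by
        have e1 : (a/2)/a = 1/2 := by field_simp
        have e2 : (a/2)/b ≤ 1/2 := by rw [div_le_iff₀ hb0]; linarith
        linarith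
      have hI' : (a/2) * (a/2 + 9*a/80) ≤ (a/3 - 9*a/80) * (2*a - a/2 - 9*a/80) := by
        nlinarith [mul_pos ha ha]
      have hII' : (a/2) * (a/2 + 9*a/80) ≤ (a/3 - 9*a/80) * (2*b - a/2 - 9*a/80) := by
        nlinarith [mul_nonneg (sub_nonneg.2 hab) ha.le, mul_pos ha ha]
      exact box_subset_acc a b (a/3) (a/2) (a/3) (a/2) (9*a/80) (9*a/80) ha hab hb
        (by linarith) (by linarith) (by linarith) (by linarith) (by linarith) (by linarith)
        (by linarith) (by linarith) hJ' (by linarith) (by linarith) hI' hII' w h1 h2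
    -- define U
    set U : Set (Pt × Pt) := B ∪ ⋃ j ∈ Finset.range N, S j with hUdef
    have hUsub : U ⊆ E := by
      rintro w (hw | hw)
      · exact hBsub hw
      · simp only [Set.mem_iUnion] at hw
        obtain ⟨j, hj, hwj⟩ := hw
        exact hSsub j (Finset.mem_range.1 hj) hwj
    have hUsub' : Prod.swap ⁻¹' U ⊆ E := fun w hw => acc_swap_mem (hUsub hw)
    -- U is in the lower region y₂ < y₁
    have hUlow : ∀ w ∈ U, w.2 1 < w.1 1 := by
      rintro w (hw | hw)
      · obtain ⟨⟨_, hy1, _⟩, _, _, hy2⟩ := hw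
        have : (9:ℝ)*a/80 < a/3 := by linarith
        linarith
      · simp only [Set.mem_iUnion] at hw
        obtain ⟨j, hj, ⟨⟨_, _, _⟩, _, _, hy2⟩⟩ := hw
        have : 0 < al := by positivity
        linarith
    have hdisj : Disjoint U (Prod.swap ⁻¹' U) := by
      rw [Set.disjoint_left]
      intro w hw hw'
      have h1 := hUlow w hw
      have h2 := hUlow _ hw'
      simp only [Prod.fst_swap, Prod.snd_swap] at h2
      linarith
    have hSm : ∀ j, MeasurableSet (S j) := fun j => measurable_shearpair _ _ _ _ _ _ _ _
    have hUm : MeasurableSet U :=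
      (measurable_boxpair _ _ _ _ _ _ _ _).union
        (MeasurableSet.biUnion (Finset.range N).countable_toSet (fun j _ => hSm j))
    have hlow : 2 * volume U ≤ volume E := total_lower E U hUm hUsub hUsub' hdisj
    -- strips are pairwise disjoint
    have hpd : (↑(Finset.range N) : Set ℕ).PairwiseDisjoint S := by
      intro i _ j _ hij
      have key : ∀ i j : ℕ, i < j → ∀ w, w ∈ S i → w ∉ S j := by
        intro i j hlt w hwi hwj
        obtain ⟨⟨_, hyi1, hyi2⟩, _⟩ := hwi
        obtain ⟨⟨_, hyj1, hyj2⟩, _⟩ := hwj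
        have h2t : 2 * t i ≤ t j := by
          have h1 : (2:ℝ)^(i+1) ≤ 2^j := by
            apply pow_le_pow_right₀ (by norm_num) hlt
          have : 2 * t i = a/2 * 2^(i+1) := by rw [ht]; ring
          rw [this]
          calc a/2 * 2^(i+1) ≤ a/2 * 2^j := mul_le_mul_of_nonneg_left h1 (by linarith)
            _ = t j := rfl
        linarith
      rcases lt_or_gt_of_ne hij with h | h
      · exact Set.disjoint_left.2 fun w hw hw' => key i j h w hw hw'
      · exact Set.disjoint_right.2 fun w hw hw' => key j i h w hw hw'
    -- disjointness of B from strips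
    have hdBU : Disjoint B (⋃ j ∈ Finset.range N, S j) := by
      rw [Set.disjoint_left]
      intro w hw hw'
      simp only [Set.mem_iUnion] at hw'
      obtain ⟨j, _, ⟨⟨_, hy1, _⟩, _⟩⟩ := hw'
      obtain ⟨⟨_, _, hy2⟩, _⟩ := hw
      have := htlb j
      linarith
    -- volume computation
    have hvolU : volume U = volume B + ∑ j ∈ Finset.range N, volume (S j) := by
      rw [hUdef, measure_union hdBU
        (MeasurableSet.biUnion (Finset.range N).countable_toSet (fun j _ => hSm j)),
        measure_biUnion_finset hpd (fun j _ => hSm j)]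
    -- lower bound each strip volume
    have hstrip : ∀ j, j < N → ENNReal.ofReal (13*a^4/24576) ≤ volume (S j) := by
      intro j hj
      have ht0j := ht0 j
      have htubj := htub j hj
      have hwidth : 13*a^2/(768*(t j)) ≤ be j - al := by
        have h1 : al ≤ 5*a^2/(192*(t j)) := by
          rw [hal]
          apply div_le_div_of_nonneg_left (by positivity) (by positivity) (by linarith)
        have h2 : 11*a^2/(256*(t j)) - 5*a^2/(192*(t j)) = 13*a^2/(768*(t j)) := by
          field_simp; ring
        rw [hbe]; linarith
      rw [hS]
      simp only
      rw [vol_shear]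
      have e1 : (ENNReal.ofReal (a/2 - a/4) * ENNReal.ofReal (2*(t j) - t j)) *
          (ENNReal.ofReal (a/8 - 0) * ENNReal.ofReal (be j - al))
          = ENNReal.ofReal ((a/2 - a/4) * (2*(t j) - t j) * ((a/8 - 0) * (be j - al))) := by
        rw [ENNReal.ofReal_mul (mul_nonneg (by linarith) (by linarith)),
          ENNReal.ofReal_mul (by linarith : (0:ℝ) ≤ a/2 - a/4),
          ENNReal.ofReal_mul (by linarith : (0:ℝ) ≤ a/8 - 0)]
      rw [e1]
      apply ENNReal.ofReal_le_ofReal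
      have e2 : (a/2 - a/4) * (2*(t j) - t j) * ((a/8 - 0) * (13*a^2/(768*(t j))))
          = 13*a^4/24576 := by
        field_simp; ring
      calc 13*a^4/24576 = (a/2 - a/4) * (2*(t j) - t j) * ((a/8 - 0) * (13*a^2/(768*(t j)))) :=
            e2.symm
        _ ≤ (a/2 - a/4) * (2*(t j) - t j) * ((a/8 - 0) * (be j - al)) := by
            apply mul_le_mul_of_nonneg_left
            · apply mul_le_mul_of_nonneg_left hwidth (by linarith)
            · apply mul_nonneg (by linarith) (by linarith)
    -- sum lower bound
    have hsumlow : (N : ℝ≥0∞) * ENNReal.ofReal (13*a^4/24576)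
        ≤ ∑ j ∈ Finset.range N, volume (S j) := by
      calc (N : ℝ≥0∞) * ENNReal.ofReal (13*a^4/24576)
          = ∑ _j ∈ Finset.range N, ENNReal.ofReal (13*a^4/24576) := by
            rw [Finset.sum_const, Finset.card_range, nsmul_eq_mul]
        _ ≤ ∑ j ∈ Finset.range N, volume (S j) :=
            Finset.sum_le_sum (fun j hj => hstrip j (Finset.mem_range.1 hj))
    have hvolB : volume B = ENNReal.ofReal ((a/2 - a/3) * (a/2 - a/3) * ((9*a/80 - 0) * (9*a/80 - 0))) := by
      rw [hB, vol_boxpair,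
        ENNReal.ofReal_mul (mul_nonneg (by linarith : (0:ℝ) ≤ a/2 - a/3) (by linarith : (0:ℝ) ≤ a/2 - a/3)),
        ENNReal.ofReal_mul (by linarith : (0:ℝ) ≤ a/2 - a/3),
        ENNReal.ofReal_mul (by linarith : (0:ℝ) ≤ 9*a/80 - 0)]
    -- final numeric inequality
    have hNlog : Real.logb 2 (b/(4*a)) < (N:ℝ) := by
      rw [hN]
      push_cast
      exact Nat.lt_floor_add_one _
    have hN1 : (1:ℝ) ≤ (N:ℝ) := by
      have : 1 ≤ N := Nat.le_add_left 1 _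
      exact_mod_cast this
    have hlog2pos : (0:ℝ) < Real.log 2 := Real.log_pos one_lt_two
    have hLbound : Real.log (b/a) < 2 * Real.log 2 + (N:ℝ) * Real.log 2 := by
      have e1 : Real.logb 2 (b/(4*a)) = Real.log (b/(4*a)) / Real.log 2 := rfl
      have e2 : Real.log (b/(4*a)) = Real.log (b/a) - Real.log 4 := by
        rw [show b/(4*a) = (b/a)/4 by ring, Real.log_div (by positivity) (by norm_num)]
      have e3 : Real.log 4 = 2 * Real.log 2 := by
        rw [show (4:ℝ) = 2^2 by norm_num, Real.log_pow]
        push_cast; ring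
      have := hNlog
      rw [e1, e2, e3, div_lt_iff₀ hlog2pos] at this
      nlinarith [this]
    have hkey : 1 + Real.log (b/a) ≤ 36/25 + 13/6 * (N:ℝ) := by
      have hlog2ub : Real.log 2 < 0.6931471808 := Real.log_two_lt_d9
      nlinarith [mul_le_mul_of_nonneg_left hlog2ub.le
        (by linarith : (0:ℝ) ≤ (N:ℝ) + 2), hLbound, hN1]
    have hreal : (1 / 2 ^ 11) * a ^ 4 * (1 + Real.log (b / a))
        ≤ 2 * ((a/2 - a/3) * (a/2 - a/3) * ((9*a/80 - 0) * (9*a/80 - 0))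
           + (N:ℝ) * (13*a^4/24576)) := by
      nlinarith [mul_nonneg (pow_nonneg ha.le 4)
        (by linarith : (0:ℝ) ≤ 36/25 + 13/6 * (N:ℝ) - (1 + Real.log (b/a)))]
    -- assemble in ℝ≥0∞
    refine le_trans ?_ hlow
    have hconv : ENNReal.ofReal (2 * ((a/2 - a/3) * (a/2 - a/3) * ((9*a/80 - 0) * (9*a/80 - 0))
        + (N:ℝ) * (13*a^4/24576)))
        ≤ 2 * volume U := by
      rw [ENNReal.ofReal_mul (by norm_num : (0:ℝ) ≤ 2)]
      rw [ENNReal.ofReal_add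
        (mul_nonneg (mul_nonneg (by linarith : (0:ℝ) ≤ a/2 - a/3) (by linarith : (0:ℝ) ≤ a/2 - a/3))
          (mul_nonneg (by linarith : (0:ℝ) ≤ 9*a/80 - 0) (by linarith : (0:ℝ) ≤ 9*a/80 - 0)))
        (by positivity)]
      rw [ENNReal.ofReal_mul (by positivity : (0:ℝ) ≤ (N:ℝ)), ENNReal.ofReal_natCast]
      rw [ENNReal.ofReal_ofNat]
      rw [hvolU, hvolB]
      apply mul_le_mul_right
      exact add_le_add_right hsumlow _
    refine le_trans ?_ hconv
    exact ENNReal.ofReal_le_ofReal hreal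
end

section
/- Let ℍ = [0,1]² be the unit square, let 0 < r ≤ 1/4, let A_r = {(x,y) ∈ ℍ : x + y ≤ r}, and let Q = [1/4, 3/4]². If w₁ ∈ ℍ \ A_r and w₂ ∈ A_r, then Q ⊄ H₂(w₁,w₂); i.e. when the convex hull of the group equals Q, a candidate inside A_r can be accepted only if both candidates lie in A_r. Consequently, vol(E_ℍ(A_r, Q)) ≤ vol(A_r)² = r⁴/4. -/
open MeasureTheory Metric Set
open scoped RealInnerProductSpace ENNReal

noncomputable section

/-- The central square `Q = [1/4, 3/4]²`. -/
def midSquare : Set Pt := {x : Pt | ∀ i, x i ∈ Set.Icc (1 / 4 : ℝ) (3 / 4)}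

/-- Auxiliary point constructor. -/
def mkPt (a b : ℝ) : Pt := (WithLp.equiv 2 (Fin 2 → ℝ)).symm ![a, b]

lemma mkPt_zero (a b : ℝ) : mkPt a b 0 = a := rfl
lemma mkPt_one (a b : ℝ) : mkPt a b 1 = b := rfl

/-- Squared distance comparison gives distance comparison in the plane. -/
lemma dist_lt_of_sq (q w₁ w₂ : Pt)
    (h : (q 0 - w₁ 0)^2 + (q 1 - w₁ 1)^2 < (q 0 - w₂ 0)^2 + (q 1 - w₂ 1)^2) :
    dist q w₁ < dist q w₂ := by
  rw [EuclideanSpace.dist_eq, EuclideanSpace.dist_eq]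
  apply Real.sqrt_lt_sqrt
  · positivity
  · simpa [Fin.sum_univ_two, Real.dist_eq, sq_abs] using h

/-- The key polynomial inequality for the asymmetric corner case. -/
lemma keyIneq (a1 a2 b1 b2 r : ℝ) (h0 : 0 ≤ a1) (h1 : a1 ≤ a2) (h2 : 0 ≤ b2)
    (h3 : a2 + b2 ≤ r) (h4 : r < a1 + b1) (h5 : b1 ≤ 1) (h6 : r ≤ 1/4) :
    (a1-a2)*(1/2-a1-a2)+(b1-b2)*(3/2-b1-b2) > 0 := by
  nlinarith [mul_nonneg (sub_nonneg.2 h1) h2, mul_nonneg h0 h2, sq_nonneg (a2-a1),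
    mul_nonneg (sub_nonneg.2 h1) (sub_nonneg.2 h1), mul_pos (sub_pos.2 h4) (sub_pos.2 h4),
    mul_nonneg (sub_nonneg.2 h1) (sub_nonneg.2 h5), mul_nonneg h0 (sub_nonneg.2 h5)]

/-- Part 1: a candidate outside the corner triangle always beats a candidate inside it
at some point of the mid square. -/
lemma part1 (r : ℝ) (hr0 : 0 < r) (hr : r ≤ 1 / 4) :
    ∀ w₁ ∈ unitSquare \ {x ∈ unitSquare | x 0 + x 1 ≤ r},
      ∀ w₂ ∈ {x ∈ unitSquare | x 0 + x 1 ≤ r},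
        ¬ midSquare ⊆ vcell unitSquare w₂ w₁ := by
  intro w₁ hw₁ w₂ hw₂ hsub
  obtain ⟨hw₁u, hw₁n⟩ := hw₁
  obtain ⟨hw₂u, hw₂r⟩ := hw₂
  have hw₁r : r < w₁ 0 + w₁ 1 := by
    by_contra h; exact hw₁n ⟨hw₁u, le_of_not_gt h⟩
  set a1 := w₁ 0; set b1 := w₁ 1; set a2 := w₂ 0; set b2 := w₂ 1
  have ha1 := hw₁u 0; have hb1 := hw₁u 1
  have ha2 := hw₂u 0; have hb2 := hw₂u 1
  simp only [Set.mem_Icc] at ha1 hb1 ha2 hb2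
  -- choose the witness point q in the mid square, by cases
  have key : ∃ qa qb : ℝ, qa ∈ Set.Icc (1/4 : ℝ) (3/4) ∧ qb ∈ Set.Icc (1/4 : ℝ) (3/4) ∧
      (qa - a1)^2 + (qb - b1)^2 < (qa - a2)^2 + (qb - b2)^2 := by
    rcases le_or_gt a1 a2 with hA | hA
    · -- a1 ≤ a2 : take q = (1/4, 3/4)
      refine ⟨1/4, 3/4, by norm_num, by norm_num, ?_⟩
      have := keyIneq a1 a2 b1 b2 r ha1.1 hA hb2.1 hw₂r hw₁r hb1.2 hr
      nlinarith [this]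
    · rcases le_or_gt b1 b2 with hB | hB
      · -- b1 ≤ b2 : take q = (3/4, 1/4), symmetric case
        refine ⟨3/4, 1/4, by norm_num, by norm_num, ?_⟩
        have := keyIneq b1 b2 a1 a2 r hb1.1 hB ha2.1 (by linarith) (by linarith) ha1.2 hr
        nlinarith [this]
      · -- a2 < a1 and b2 < b1 : take q = (3/4, 3/4)
        refine ⟨3/4, 3/4, by norm_num, by norm_num, ?_⟩
        nlinarith [hA, hB, ha1.2, hb1.2, ha2.1, hb2.1, hw₂r, hw₁r, hr]
  obtain ⟨qa, qb, hqa, hqb, hlt⟩ := key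
  set q : Pt := mkPt qa qb with hq
  have hqmid : q ∈ midSquare := by
    intro i
    fin_cases i
    · simpa [hq, mkPt_zero] using hqa
    · simpa [hq, mkPt_one] using hqb
  have := hsub hqmid
  obtain ⟨-, hdist⟩ := this
  have hlt' : dist q w₁ < dist q w₂ := by
    apply dist_lt_of_sq
    simpa [hq, mkPt_zero, mkPt_one] using hlt
  exact absurd hdist (not_le.2 hlt')

/-- The corner triangle has volume at most `r²/2`. -/
lemma triangle_vol (r : ℝ) (hr0 : 0 < r) :
    volume {x ∈ unitSquare | x 0 + x 1 ≤ r} ≤ ENNReal.ofReal (r ^ 2 / 2) := by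
  -- transfer to ℝ × ℝ
  set F : Pt ≃ᵐ (ℝ × ℝ) :=
    (MeasurableEquiv.toLp 2 (Fin 2 → ℝ)).symm.trans (MeasurableEquiv.finTwoArrow)
  have hF : MeasurePreserving F volume volume :=
    (volume_preserving_finTwoArrow ℝ).comp
      (EuclideanSpace.volume_preserving_symm_measurableEquiv_toLp (Fin 2))
  set S : Set (ℝ × ℝ) := {p | p.1 ∈ Set.Icc 0 r ∧ p.2 ∈ Set.Icc 0 (r - p.1)} with hS
  have hSm : MeasurableSet S := by
    apply MeasurableSet.inter
    · exact measurable_fst measurableSet_Icc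
    · apply measurableSet_le measurable_const measurable_snd |>.inter
      exact measurableSet_le measurable_snd (measurable_const.sub measurable_fst)
  have hsub : {x ∈ unitSquare | x 0 + x 1 ≤ r} ⊆ F ⁻¹' S := by
    intro x ⟨hx, hxr⟩
    have h0 := hx 0; have h1 := hx 1
    simp only [Set.mem_Icc] at h0 h1
    have hFx : F x = (x 0, x 1) := rfl
    rw [Set.mem_preimage, hFx]
    exact ⟨⟨h0.1, by linarith [h1.1]⟩, ⟨h1.1, by linarith⟩⟩
  calc volume {x ∈ unitSquare | x 0 + x 1 ≤ r}
      ≤ volume (F ⁻¹' S) := measure_mono hsub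
    _ = volume S := hF.measure_preimage hSm.nullMeasurableSet
    _ ≤ ENNReal.ofReal (r ^ 2 / 2) := by
        rw [Measure.volume_eq_prod, Measure.prod_apply hSm]
        have hslice : ∀ x : ℝ, volume (Prod.mk x ⁻¹' S)
            = Set.indicator (Set.Icc 0 r) (fun x => ENNReal.ofReal (r - x)) x := by
          intro x
          by_cases hx : x ∈ Set.Icc (0:ℝ) r
          · have hpre : Prod.mk x ⁻¹' S = Set.Icc 0 (r - x) := by
              ext y
              simp only [hS, Set.mem_preimage, Set.mem_setOf_eq]
              exact ⟨fun h => h.2, fun h => ⟨hx, h⟩⟩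
            rw [hpre, Set.indicator_of_mem hx, Real.volume_Icc, sub_zero]
          · have hpre : Prod.mk x ⁻¹' S = ∅ := by
              ext y
              simp only [hS, Set.mem_preimage, Set.mem_setOf_eq,
                Set.mem_empty_iff_false, iff_false, not_and]
              exact fun h _ => hx h
            rw [hpre, Set.indicator_of_notMem hx, measure_empty]
        rw [lintegral_congr hslice, lintegral_indicator measurableSet_Icc]
        have hint : IntegrableOn (fun x => r - x) (Set.Icc 0 r) volume :=
          (continuous_const.sub continuous_id).integrableOn_Icc
        have hae : 0 ≤ᵐ[volume.restrict (Set.Icc (0:ℝ) r)] fun x => r - x :=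
          (ae_restrict_iff' measurableSet_Icc).2
            (Filter.Eventually.of_forall fun x hx => sub_nonneg.2 hx.2)
        rw [← ofReal_integral_eq_lintegral_ofReal hint hae]
        apply ENNReal.ofReal_le_ofReal
        rw [MeasureTheory.integral_Icc_eq_integral_Ioc,
          ← intervalIntegral.integral_of_le hr0.le]
        rw [intervalIntegral.integral_sub intervalIntegrable_const
          intervalIntegral.intervalIntegrable_id]
        simp only [intervalIntegral.integral_const, integral_id, smul_eq_mul]
        nlinarith [sq_nonneg r]


/-- Let `0 < r ≤ 1/4`, `A_r = {(x,y) ∈ ℍ : x + y ≤ r}` and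
`Q = [1/4, 3/4]²`. If `w₁ ∈ ℍ \ A_r` and `w₂ ∈ A_r` then `Q ⊄ H₂(w₁, w₂)`: when the
convex hull of the group equals `Q`, a candidate inside `A_r` can only be accepted if both
candidates lie in `A_r`. Consequently `vol (E_ℍ(A_r, Q)) ≤ vol(A_r)² = r⁴/4`. -/
theorem accept_in_corner_needs_both_candidates (r : ℝ) (hr0 : 0 < r) (hr : r ≤ 1 / 4) :
    (∀ w₁ ∈ unitSquare \ {x ∈ unitSquare | x 0 + x 1 ≤ r},
      ∀ w₂ ∈ {x ∈ unitSquare | x 0 + x 1 ≤ r},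
        ¬ midSquare ⊆ vcell unitSquare w₂ w₁) ∧
      volume (accEvent unitSquare {x ∈ unitSquare | x 0 + x 1 ≤ r} midSquare)
        ≤ ENNReal.ofReal (r ^ 4 / 4) := by
  refine ⟨part1 r hr0 hr, ?_⟩
  set T := {x ∈ unitSquare | x 0 + x 1 ≤ r} with hT
  have hsub : accEvent unitSquare T midSquare ⊆ T ×ˢ T := by
    rintro ⟨w₁, w₂⟩ ⟨h1, h2, hor⟩
    rcases hor with ⟨hw₁T, hcell⟩ | ⟨hw₂T, hcell⟩
    · refine ⟨hw₁T, ?_⟩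
      by_contra hw₂T
      exact part1 r hr0 hr w₂ ⟨h2, hw₂T⟩ w₁ hw₁T hcell
    · refine ⟨?_, hw₂T⟩
      by_contra hw₁T
      exact part1 r hr0 hr w₁ ⟨h1, hw₁T⟩ w₂ hw₂T hcell
  calc volume (accEvent unitSquare T midSquare)
      ≤ volume (T ×ˢ T) := measure_mono hsub
    _ = volume T * volume T := by
        rw [Measure.volume_eq_prod, Measure.prod_prod]
    _ ≤ ENNReal.ofReal (r ^ 2 / 2) * ENNReal.ofReal (r ^ 2 / 2) :=
        mul_le_mul' (triangle_vol r hr0) (triangle_vol r hr0)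
    _ = ENNReal.ofReal (r ^ 4 / 4) := by
        rw [← ENNReal.ofReal_mul (by positivity)]
        ring_nf

end
end

section
/- Consider the consensus-voting group process on the unit square ℍ = [0,1]². For each round t ≥ 1 let Aᵗ = {(x,y) ∈ ℍ : x + y ≤ 1/(4t^{1/4})}. Then there exist a constant c > 0 and a constant τ ∈ ℕ such that for all t ≥ τ, Pr[Sᵗ ∩ Aᵗ = ∅] ≥ c. -/
open MeasureTheory Metric Set
open scoped RealInnerProductSpace ENNReal

noncomputable section

lemma volume_box (p q : ℝ) :
    volume {x : Pt | ∀ i, x i ∈ Set.Icc p q} = ENNReal.ofReal (q - p) ^ 2 := by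
  have hmp := EuclideanSpace.volume_preserving_symm_measurableEquiv_toLp (Fin 2)
  have hset : {x : Pt | ∀ i, x i ∈ Set.Icc p q} =
      (MeasurableEquiv.toLp 2 (Fin 2 → ℝ)).symm ⁻¹' (Set.pi univ fun _ => Set.Icc p q) := by
    ext x
    simp only [Set.mem_preimage, Set.mem_univ_pi, MeasurableEquiv.coe_toLp_symm,
      Set.mem_setOf_eq]
  rw [hset, hmp.measure_preimage
    (MeasurableSet.univ_pi fun _ => measurableSet_Icc).nullMeasurableSet]
  rw [volume_pi_pi]
  simp [Real.volume_Icc, Finset.prod_const]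

lemma pi_cyl {n : ℕ} {X : Type*} [MeasurableSpace X] (m : Measure X) [IsProbabilityMeasure m]
    (i : Fin n) (S : Set X) :
    Measure.pi (fun _ : Fin n => m) (Function.eval i ⁻¹' S) = m S := by
  have hset : Function.eval i ⁻¹' S = Set.pi univ (fun j => if j = i then S else univ) := by
    ext f
    constructor
    · intro h j _
      by_cases hj : j = i
      · subst hj; simpa using h
      · simp [hj]
    · intro h
      have := h i (mem_univ i)
      simpa using this
  rw [hset, Measure.pi_pi]
  simp [apply_ite m, measure_univ, Finset.prod_ite_eq']

lemma key_geom {x y a b a' b' : ℝ} (hx : 3/4 ≤ x) (hx1 : x ≤ 1) (hy : 3/4 ≤ y) (hy1 : y ≤ 1)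
    (ha : 0 ≤ a) (hb : 0 ≤ b) (ha' : 0 ≤ a') (ha'1 : a' ≤ 1) (hb' : 0 ≤ b') (hb'1 : b' ≤ 1)
    (hs : a + b ≤ 1/8)
    (hd : (x-a)^2 + (y-b)^2 ≤ (x-a')^2 + (y-b')^2) : a' + b' ≤ 2*(a+b) := by
  by_cases h : a' + b' ≤ 1/2
  · nlinarith [mul_nonneg (add_nonneg ha' hb') (by linarith : (0:ℝ) ≤ 1/2 - (a'+b')),
      mul_nonneg ha' (by linarith : (0:ℝ) ≤ x - 3/4),
      mul_nonneg hb' (by linarith : (0:ℝ) ≤ y - 3/4),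
      mul_nonneg ha (by linarith : (0:ℝ) ≤ 1 - x),
      mul_nonneg hb (by linarith : (0:ℝ) ≤ 1 - y), sq_nonneg a, sq_nonneg b]
  · exfalso
    nlinarith [mul_nonneg ha' (by linarith : (0:ℝ) ≤ x - 3/4),
      mul_nonneg hb' (by linarith : (0:ℝ) ≤ y - 3/4),
      mul_nonneg ha' (by linarith : (0:ℝ) ≤ 1 - a'),
      mul_nonneg hb' (by linarith : (0:ℝ) ≤ 1 - b'),
      mul_nonneg ha (by linarith : (0:ℝ) ≤ 1 - x),
      mul_nonneg hb (by linarith : (0:ℝ) ≤ 1 - y), sq_nonneg a, sq_nonneg b]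

lemma dist_coord {v w w' : Pt} (h : dist v w ≤ dist v w') :
    (v 0 - w 0)^2 + (v 1 - w 1)^2 ≤ (v 0 - w' 0)^2 + (v 1 - w' 1)^2 := by
  have h2 : dist v w ^ 2 ≤ dist v w' ^ 2 := pow_le_pow_left₀ dist_nonneg h 2
  rw [EuclideanSpace.dist_eq, EuclideanSpace.dist_eq,
    Real.sq_sqrt (Finset.sum_nonneg fun i _ => sq_nonneg _),
    Real.sq_sqrt (Finset.sum_nonneg fun i _ => sq_nonneg _)] at h2
  simpa [Fin.sum_univ_two, Real.dist_eq, sq_abs] using h2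

lemma anchored {v w w' : Pt} (hv : ∀ i, v i ∈ Set.Icc (3/4 : ℝ) 1)
    (hw : w ∈ unitSquare) (hw' : w' ∈ unitSquare) (hs : w 0 + w 1 ≤ 1/8)
    (h : dist v w ≤ dist v w') : w' 0 + w' 1 ≤ 2 * (w 0 + w 1) :=
  key_geom (hv 0).1 (hv 0).2 (hv 1).1 (hv 1).2 (hw 0).1 (hw 1).1
    (hw' 0).1 (hw' 0).2 (hw' 1).1 (hw' 1).2 hs (dist_coord h)

lemma grp_subset_succ {k : ℕ} (init : Fin k → Pt) (c : ℕ → Pt × Pt) (s : ℕ) :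
    grp init c s ⊆ grp init c (s + 1) := by
  show grp init c s ⊆ step (grp init c s) (c s)
  unfold step
  split_ifs <;> first | exact subset_insert _ _ | exact subset_rfl

lemma range_subset_grp {k : ℕ} (init : Fin k → Pt) (c : ℕ → Pt × Pt) (s : ℕ) :
    Set.range init ⊆ grp init c s := by
  induction s with
  | zero => exact subset_rfl
  | succ n ih => exact ih.trans (grp_subset_succ init c n)

def BadPair (δ : ℝ) (p : Pt × Pt) : Prop :=
  (p.1 0 + p.1 1 ≤ δ ∧ p.2 0 + p.2 1 ≤ 2*δ) ∨ (p.2 0 + p.2 1 ≤ δ ∧ p.1 0 + p.1 1 ≤ 2*δ)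

lemma core_s13 {k : ℕ} (init : Fin k → Pt) (c : ℕ → Pt × Pt) (δ : ℝ) (hδ8 : δ ≤ 1/8)
    (i₀ : Fin k) (h0 : ∀ i, (init i₀) i ∈ Set.Icc (3/4 : ℝ) 1)
    (hinit : ∀ i, δ < (init i) 0 + (init i) 1) (t : ℕ)
    (hc : ∀ s < t, (c s).1 ∈ unitSquare ∧ (c s).2 ∈ unitSquare)
    (hbad : ∀ s < t, ¬ BadPair δ (c s)) :
    ∀ v ∈ grp init c t, δ < v 0 + v 1 := by
  induction t with
  | zero => rintro v ⟨i, rfl⟩; exact hinit i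
  | succ n ih =>
    have hc' : ∀ s < n, (c s).1 ∈ unitSquare ∧ (c s).2 ∈ unitSquare :=
      fun s hs => hc s (hs.trans n.lt_succ_self)
    have hbad' : ∀ s < n, ¬ BadPair δ (c s) := fun s hs => hbad s (hs.trans n.lt_succ_self)
    have ihn := ih hc' hbad'
    have hmem : init i₀ ∈ grp init c n := range_subset_grp init c n (mem_range_self i₀)
    intro v hv
    show δ < v 0 + v 1
    have hn : n < n + 1 := n.lt_succ_self
    rw [show grp init c (n+1) = step (grp init c n) (c n) from rfl, step] at hv
    split_ifs at hv with h1 h2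
    · rcases hv with rfl | hv
      · by_contra hle
        push_neg at hle
        have hcs := anchored h0 (hc n hn).1 (hc n hn).2 (hle.trans hδ8) (h1 _ hmem)
        exact hbad n hn (Or.inl ⟨hle, by linarith⟩)
      · exact ihn v hv
    · rcases hv with rfl | hv
      · by_contra hle
        push_neg at hle
        have hcs := anchored h0 (hc n hn).2 (hc n hn).1 (hle.trans hδ8) (h2 _ hmem)
        exact hbad n hn (Or.inr ⟨hle, by linarith⟩)
      · exact ihn v hv
    · exact ihn v hv

lemma hull_subset {k : ℕ} (init : Fin k → Pt) (c : ℕ → Pt × Pt) (t : ℕ) (δ : ℝ)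
    (h : ∀ v ∈ grp init c t, δ < v 0 + v 1) :
    convexHull ℝ (grp init c t) ⊆ {x : Pt | δ < x 0 + x 1} := by
  apply convexHull_min h
  exact convex_halfSpace_gt ⟨fun u v => by simp [PiLp.add_apply]; ring,
    fun r u => by simp [PiLp.smul_apply]; ring⟩ δ


lemma aux_bound (μ : Measure Pt) [IsProbabilityMeasure μ]
    (hμL : ∀ a : ℝ, 0 ≤ a → μ {x : Pt | x 0 + x 1 ≤ a} ≤ ENNReal.ofReal a ^ 2)
    (hμQ : μ {x : Pt | ∀ i, x i ∈ Set.Icc (3/4 : ℝ) 1} = ENNReal.ofReal (1/16))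
    (hμsqc : μ (unitSquareᶜ) = 0)
    (k : ℕ) (hk : 1 ≤ k) (t : ℕ) (ht : 16*(k+1)^2 ≤ t) :
    ENNReal.ofReal (1/64) ≤
      procMeasure μ k t
        {ω | convexHull ℝ (grp ω.1 (extSeq ω.2) t) ∩
            {x ∈ unitSquare | x 0 + x 1 ≤ 1 / (4 * (t : ℝ) ^ ((1 : ℝ) / 4))} = ∅} := by
  set L : ℝ → Set Pt := fun a => {x : Pt | x 0 + x 1 ≤ a} with hL
  set Q : Set Pt := {x : Pt | ∀ i, x i ∈ Set.Icc (3/4 : ℝ) 1} with hQ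
  -- basic real analysis of δ
  have ht0 : 0 < t := lt_of_lt_of_le (Nat.mul_pos (by norm_num) (pow_pos k.succ_pos 2)) ht
  have htR : (0:ℝ) < t := by exact_mod_cast ht0
  set r : ℝ := (t:ℝ) ^ ((1:ℝ)/4) with hrdef
  have hr0 : 0 < r := Real.rpow_pos_of_pos htR _
  have hr4 : r ^ (4:ℕ) = t := by
    rw [hrdef, ← Real.rpow_natCast ((t:ℝ) ^ ((1:ℝ)/4)) 4, ← Real.rpow_mul htR.le]
    norm_num
  have htlb : (16:ℝ)*((k:ℝ)+1)^2 ≤ t := by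
    have h := (Nat.cast_le (α := ℝ)).2 ht
    push_cast at h
    linarith
  have hr2 : 4*((k:ℝ)+1) ≤ r^2 := by
    nlinarith [sq_nonneg (r^2 - 4*((k:ℝ)+1)), sq_nonneg (r^2 + 4*((k:ℝ)+1)), hr4, hr0]
  have hrge2 : 2 ≤ r := by
    have hk0 : (1:ℝ) ≤ ((k:ℝ)+1) := by have := Nat.cast_nonneg (α := ℝ) k; linarith
    nlinarith [hr2, hr0, sq_nonneg (r - 2)]
  set δ : ℝ := 1 / (4 * r) with hδdef
  have hδ0 : 0 < δ := by positivity
  have hδ8 : δ ≤ 1/8 := by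
    rw [hδdef]
    rw [div_le_div_iff₀ (by positivity) (by norm_num)]
    linarith
  have hkδ : (k:ℝ) * δ^2 ≤ 1/64 := by
    have hδ2 : δ^2 = 1/(16*r^2) := by rw [hδdef]; field_simp; ring
    rw [hδ2, mul_one_div, div_le_div_iff₀ (by positivity) (by norm_num)]
    nlinarith [hr2, Nat.cast_nonneg (α := ℝ) k]
  have h8t : 8 * (t:ℝ) * δ^4 = 1/32 := by
    have hδ4 : δ^4 = 1/(256*t) := by
      rw [hδdef]
      rw [div_pow, one_pow, show (4*r)^4 = 256 * (r^(4:ℕ)) by ring, hr4]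
    rw [hδ4]
    field_simp
    ring
  -- the measure space
  haveI : IsProbabilityMeasure (μ.prod μ) := by infer_instance
  haveI : IsProbabilityMeasure (Measure.pi fun _ : Fin k => μ) := by infer_instance
  haveI : IsProbabilityMeasure (Measure.pi fun _ : Fin t => μ.prod μ) := by infer_instance
  set P := procMeasure μ k t with hPdef
  set i₀ : Fin k := ⟨0, hk⟩ with hi₀
  set C : Set ((Fin k → Pt) × (Fin t → Pt × Pt)) :=
    Prod.fst ⁻¹' (Function.eval i₀ ⁻¹' Q) with hC
  set Bset : Set (Pt × Pt) := (L δ ×ˢ L (2*δ)) ∪ (L (2*δ) ×ˢ L δ) with hB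
  set D1 : Set ((Fin k → Pt) × (Fin t → Pt × Pt)) :=
    ⋃ i : Fin k, Prod.fst ⁻¹' (Function.eval i ⁻¹' (L δ)) with hD1
  set D2 : Set ((Fin k → Pt) × (Fin t → Pt × Pt)) :=
    ⋃ s : Fin t, Prod.snd ⁻¹' (Function.eval s ⁻¹' Bset) with hD2
  set N : Set ((Fin k → Pt) × (Fin t → Pt × Pt)) :=
    (⋃ i : Fin k, Prod.fst ⁻¹' (Function.eval i ⁻¹' (unitSquareᶜ))) ∪
    (⋃ s : Fin t, Prod.snd ⁻¹' (Function.eval s ⁻¹'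
      (Prod.fst ⁻¹' (unitSquareᶜ) ∪ Prod.snd ⁻¹' (unitSquareᶜ)))) with hN
  -- measure computations
  have hfst : ∀ S : Set (Fin k → Pt), P (Prod.fst ⁻¹' S) = Measure.pi (fun _ : Fin k => μ) S := by
    intro S
    rw [hPdef, procMeasure, ← Set.prod_univ, Measure.prod_prod, measure_univ, mul_one]
  have hsnd : ∀ S : Set (Fin t → Pt × Pt),
      P (Prod.snd ⁻¹' S) = Measure.pi (fun _ : Fin t => μ.prod μ) S := by
    intro S
    rw [hPdef, procMeasure, ← Set.univ_prod, Measure.prod_prod, measure_univ, one_mul]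
  have hPC : P C = ENNReal.ofReal (1/16) := by
    rw [hC, hfst, pi_cyl, hμQ]
  have hPD1 : P D1 ≤ ENNReal.ofReal (1/64) := by
    calc P D1 ≤ ∑' i : Fin k, P (Prod.fst ⁻¹' (Function.eval i ⁻¹' (L δ))) :=
          measure_iUnion_le _
      _ = ∑' _i : Fin k, μ (L δ) := by
          congr 1; funext i; rw [hfst, pi_cyl]
      _ = (k : ℝ≥0∞) * μ (L δ) := by
          rw [tsum_fintype]
          simp [Finset.sum_const, Finset.card_univ]
      _ ≤ (k : ℝ≥0∞) * ENNReal.ofReal δ ^ 2 := by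
          exact mul_le_mul_right (hμL δ hδ0.le) _
      _ = ENNReal.ofReal ((k:ℝ) * δ^2) := by
          rw [← ENNReal.ofReal_pow hδ0.le, ← ENNReal.ofReal_natCast k,
            ← ENNReal.ofReal_mul (by positivity)]
      _ ≤ ENNReal.ofReal (1/64) := ENNReal.ofReal_le_ofReal hkδ
  have hPD2 : P D2 ≤ ENNReal.ofReal (1/32) := by
    have hBmeas : (μ.prod μ) Bset ≤ ENNReal.ofReal (8 * δ^4) := by
      calc (μ.prod μ) Bset ≤ (μ.prod μ) (L δ ×ˢ L (2*δ)) + (μ.prod μ) (L (2*δ) ×ˢ L δ) :=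
            measure_union_le _ _
        _ = μ (L δ) * μ (L (2*δ)) + μ (L (2*δ)) * μ (L δ) := by
            rw [Measure.prod_prod, Measure.prod_prod]
        _ ≤ ENNReal.ofReal δ ^2 * ENNReal.ofReal (2*δ) ^2
            + ENNReal.ofReal (2*δ) ^2 * ENNReal.ofReal δ ^2 := by
            gcongr <;> [exact hμL δ hδ0.le; exact hμL _ (by positivity);
              exact hμL _ (by positivity); exact hμL δ hδ0.le]
        _ = ENNReal.ofReal (8 * δ^4) := by
            rw [← ENNReal.ofReal_pow hδ0.le, ← ENNReal.ofReal_pow (by positivity),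
              ← ENNReal.ofReal_mul (by positivity), ← ENNReal.ofReal_mul (by positivity),
              ← ENNReal.ofReal_add (by positivity) (by positivity)]
            congr 1
            ring
    calc P D2 ≤ ∑' s : Fin t, P (Prod.snd ⁻¹' (Function.eval s ⁻¹' Bset)) :=
          measure_iUnion_le _
      _ = ∑' _s : Fin t, (μ.prod μ) Bset := by
          congr 1; funext s; rw [hsnd, pi_cyl]
      _ = (t : ℝ≥0∞) * (μ.prod μ) Bset := by
          rw [tsum_fintype]
          simp [Finset.sum_const, Finset.card_univ]
      _ ≤ (t : ℝ≥0∞) * ENNReal.ofReal (8 * δ^4) := mul_le_mul_right hBmeas _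
      _ = ENNReal.ofReal ((t:ℝ) * (8 * δ^4)) := by
          rw [← ENNReal.ofReal_natCast t, ← ENNReal.ofReal_mul (by positivity)]
      _ = ENNReal.ofReal (1/32) := by rw [show (t:ℝ) * (8*δ^4) = 8*(t:ℝ)*δ^4 by ring, h8t]
  have hPN : P N = 0 := by
    have h1 : ∀ i : Fin k, P (Prod.fst ⁻¹' (Function.eval i ⁻¹' (unitSquareᶜ))) = 0 := by
      intro i; rw [hfst, pi_cyl, hμsqc]
    have h2 : ∀ s : Fin t, P (Prod.snd ⁻¹' (Function.eval s ⁻¹'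
        (Prod.fst ⁻¹' (unitSquareᶜ) ∪ Prod.snd ⁻¹' (unitSquareᶜ)))) = 0 := by
      intro s
      rw [hsnd, pi_cyl]
      refine le_antisymm ?_ zero_le
      calc (μ.prod μ) (Prod.fst ⁻¹' (unitSquareᶜ) ∪ Prod.snd ⁻¹' (unitSquareᶜ))
          ≤ (μ.prod μ) (Prod.fst ⁻¹' (unitSquareᶜ)) + (μ.prod μ) (Prod.snd ⁻¹' (unitSquareᶜ)) :=
            measure_union_le _ _
        _ = 0 := by
            rw [← Set.prod_univ, ← Set.univ_prod, Measure.prod_prod, Measure.prod_prod, hμsqc]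
            simp
    refine le_antisymm ?_ zero_le
    rw [hN]
    calc P _ ≤ P (⋃ i : Fin k, Prod.fst ⁻¹' (Function.eval i ⁻¹' (unitSquareᶜ))) +
          P (⋃ s : Fin t, Prod.snd ⁻¹' (Function.eval s ⁻¹'
            (Prod.fst ⁻¹' (unitSquareᶜ) ∪ Prod.snd ⁻¹' (unitSquareᶜ)))) := measure_union_le _ _
      _ ≤ (∑' i : Fin k, P (Prod.fst ⁻¹' (Function.eval i ⁻¹' (unitSquareᶜ)))) +
          (∑' s : Fin t, P (Prod.snd ⁻¹' (Function.eval s ⁻¹'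
            (Prod.fst ⁻¹' (unitSquareᶜ) ∪ Prod.snd ⁻¹' (unitSquareᶜ))))) := by
            gcongr <;> exact measure_iUnion_le _
      _ = 0 := by
          rw [tsum_fintype, tsum_fintype, Finset.sum_eq_zero fun i _ => h1 i,
            Finset.sum_eq_zero fun s _ => h2 s, add_zero]
  -- the good event
  set D := D1 ∪ D2 ∪ N with hD
  have hPD : P D ≤ ENNReal.ofReal (3/64) := by
    calc P D ≤ P (D1 ∪ D2) + P N := measure_union_le _ _
      _ ≤ P D1 + P D2 + P N := by gcongr; exact measure_union_le _ _
      _ ≤ ENNReal.ofReal (1/64) + ENNReal.ofReal (1/32) + 0 := by gcongr <;>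
            first | exact hPD1 | exact hPD2 | exact le_of_eq hPN
      _ = ENNReal.ofReal (3/64) := by
          rw [add_zero, ← ENNReal.ofReal_add (by norm_num) (by norm_num)]
          norm_num
  -- inclusion into the target event
  have hincl : C \ D ⊆
      {ω : (Fin k → Pt) × (Fin t → Pt × Pt) |
        convexHull ℝ (grp ω.1 (extSeq ω.2) t) ∩
          {x ∈ unitSquare | x 0 + x 1 ≤ 1 / (4 * (t : ℝ) ^ ((1 : ℝ) / 4))} = ∅} := by
    rintro ω ⟨hωC, hωD⟩
    have hnD1 : ω ∉ D1 := fun h => hωD (Or.inl (Or.inl h))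
    have hnD2 : ω ∉ D2 := fun h => hωD (Or.inl (Or.inr h))
    have hnN : ω ∉ N := fun h => hωD (Or.inr h)
    have hinit : ∀ i, δ < (ω.1 i) 0 + (ω.1 i) 1 := by
      intro i
      by_contra hle
      push_neg at hle
      exact hnD1 (mem_iUnion.2 ⟨i, hle⟩)
    have hcand : ∀ s < t, (extSeq ω.2 s).1 ∈ unitSquare ∧ (extSeq ω.2 s).2 ∈ unitSquare := by
      intro s hs
      have he : extSeq ω.2 s = ω.2 ⟨s, hs⟩ := dif_pos hs
      rw [he]
      constructor
      · by_contra hc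
        exact hnN (Or.inr (mem_iUnion.2 ⟨⟨s, hs⟩, Or.inl hc⟩))
      · by_contra hc
        exact hnN (Or.inr (mem_iUnion.2 ⟨⟨s, hs⟩, Or.inr hc⟩))
    have hbad : ∀ s < t, ¬ BadPair δ (extSeq ω.2 s) := by
      intro s hs hBP
      have he : extSeq ω.2 s = ω.2 ⟨s, hs⟩ := dif_pos hs
      rw [he] at hBP
      apply hnD2
      refine mem_iUnion.2 ⟨⟨s, hs⟩, ?_⟩
      rcases hBP with ⟨h1, h2⟩ | ⟨h1, h2⟩
      · exact Or.inl ⟨h1, h2⟩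
      · exact Or.inr ⟨h2, h1⟩
    have hcore := core_s13 ω.1 (extSeq ω.2) δ hδ8 i₀ hωC hinit t hcand hbad
    have hhull := hull_subset ω.1 (extSeq ω.2) t δ hcore
    show convexHull ℝ (grp ω.1 (extSeq ω.2) t) ∩
        {x ∈ unitSquare | x 0 + x 1 ≤ 1 / (4 * (t : ℝ) ^ ((1 : ℝ) / 4))} = ∅
    rw [eq_empty_iff_forall_notMem]
    rintro x ⟨hx1, hx2, hx3⟩
    have := hhull hx1
    rw [mem_setOf_eq] at this
    rw [← hrdef, ← hδdef] at hx3
    linarith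
  -- conclusion
  have hCsub : C ⊆ (C \ D) ∪ D := by
    intro x hx
    by_cases hD' : x ∈ D
    · exact Or.inr hD'
    · exact Or.inl ⟨hx, hD'⟩
  have hchain : ENNReal.ofReal (1/16) ≤ P (C \ D) + ENNReal.ofReal (3/64) := by
    calc ENNReal.ofReal (1/16) = P C := hPC.symm
      _ ≤ P ((C \ D) ∪ D) := measure_mono hCsub
      _ ≤ P (C \ D) + P D := measure_union_le _ _
      _ ≤ P (C \ D) + ENNReal.ofReal (3/64) := by gcongr
  have hfin : ENNReal.ofReal (1/64) ≤ P (C \ D) := by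
    have heq : ENNReal.ofReal (1/16) = ENNReal.ofReal (1/64) + ENNReal.ofReal (3/64) := by
      rw [← ENNReal.ofReal_add (by norm_num) (by norm_num)]; norm_num
    rw [heq] at hchain
    exact (ENNReal.add_le_add_iff_right ENNReal.ofReal_ne_top).1 hchain
  exact hfin.trans (measure_mono hincl)


/-- For the consensus-voting group process on the unit square
`ℍ = [0,1]²` (with `k ≥ 1` uniform initial members and two i.i.d. uniform candidates per
round), and the corner caps `Aᵗ = {(x,y) ∈ ℍ : x + y ≤ 1/(4t^{1/4})}`, there are constants
`c > 0` and `τ ∈ ℕ` such that `Pr[Sᵗ ∩ Aᵗ = ∅] ≥ c` for every `t ≥ τ`, where `Sᵗ` is the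
convex hull of the group after `t` rounds. -/
theorem prob_hull_misses_corner_ge (k : ℕ) (hk : 1 ≤ k) :
    ∃ c : ℝ, 0 < c ∧ ∃ τ : ℕ, ∀ t : ℕ, τ ≤ t →
      ENNReal.ofReal c ≤
        procMeasure (volume.restrict unitSquare) k t
          {ω | convexHull ℝ (grp ω.1 (extSeq ω.2) t) ∩
              {x ∈ unitSquare | x 0 + x 1 ≤ 1 / (4 * (t : ℝ) ^ ((1 : ℝ) / 4))} = ∅} := by
  have hsq_meas : MeasurableSet unitSquare := by
    have : unitSquare = ⋂ i, (fun x : Pt => x i) ⁻¹' Set.Icc (0:ℝ) 1 := by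
      ext x; simp [unitSquare]
    rw [this]
    exact MeasurableSet.iInter fun i => (measurable_coord i) measurableSet_Icc
  have hsq_vol : volume unitSquare = 1 := by
    rw [show unitSquare = {x : Pt | ∀ i, x i ∈ Set.Icc (0:ℝ) 1} from rfl, volume_box]
    norm_num
  haveI hP : IsProbabilityMeasure (volume.restrict unitSquare) :=
    ⟨by rw [Measure.restrict_apply_univ]; exact hsq_vol⟩
  have hμL : ∀ a : ℝ, 0 ≤ a →
      (volume.restrict unitSquare) {x : Pt | x 0 + x 1 ≤ a} ≤ ENNReal.ofReal a ^ 2 := by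
    intro a ha
    rw [Measure.restrict_apply' hsq_meas]
    calc volume ({x : Pt | x 0 + x 1 ≤ a} ∩ unitSquare)
        ≤ volume {x : Pt | ∀ i, x i ∈ Set.Icc 0 a} := by
          apply measure_mono
          rintro x ⟨hx1, hx2⟩
          have hsum : x 0 + x 1 ≤ a := hx1
          have h0 := (hx2 0).1
          have h1 := (hx2 1).1
          intro i
          fin_cases i
          · show x 0 ∈ Set.Icc 0 a
            exact ⟨h0, by linarith⟩
          · show x 1 ∈ Set.Icc 0 a
            exact ⟨h1, by linarith⟩
      _ = ENNReal.ofReal a ^ 2 := by rw [volume_box]; norm_num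
  have hμQ : (volume.restrict unitSquare) {x : Pt | ∀ i, x i ∈ Set.Icc (3/4 : ℝ) 1}
      = ENNReal.ofReal (1/16) := by
    rw [Measure.restrict_apply' hsq_meas]
    have heq : {x : Pt | ∀ i, x i ∈ Set.Icc (3/4 : ℝ) 1} ∩ unitSquare
        = {x : Pt | ∀ i, x i ∈ Set.Icc (3/4 : ℝ) 1} := by
      apply inter_eq_left.2
      intro x hx i
      exact ⟨le_trans (by norm_num) (hx i).1, (hx i).2⟩
    rw [heq, volume_box, ← ENNReal.ofReal_pow (by norm_num)]
    norm_num
  have hμsqc : (volume.restrict unitSquare) (unitSquareᶜ) = 0 := by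
    rw [Measure.restrict_apply' hsq_meas, compl_inter_self, measure_empty]
  exact ⟨1/64, by norm_num, 16*(k+1)^2, fun t ht =>
    aux_bound (volume.restrict unitSquare) hμL hμQ hμsqc k hk t ht⟩

end
end
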